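/- arXiv:1708.03199 — 15 statements merged into one kernel-verified Lean document; each statement's English description precedes it below -/
import Mathlib

section
/- Let R be a commutative ring, let p be a minimal prime ideal of R, and let U be a quasi-compact open subset of Spec(R) in the Zariski topology such that p ∉ U. Then there exists an element f ∈ R with f ∉ p such that D(f) ∩ U = ∅. -/
open PrimeSpectrum

lemma aux_key {R : Type*} [CommRing R] (p : PrimeSpectrum R)
    (hp : p.asIdeal ∈ minimalPrimes R) {g : R} (hg : g ∈ p.asIdeal) :
    ∃ s, s ∉ p.asIdeal ∧ ∃ n : ℕ, s * g ^ n = 0 := by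
  have h1 : algebraMap R (Localization p.asIdeal.primeCompl) g ∈
      IsLocalRing.maximalIdeal (Localization p.asIdeal.primeCompl) :=
    (IsLocalization.AtPrime.to_map_mem_maximal_iff _ p.asIdeal g).mpr hg
  obtain ⟨n, hn⟩ : IsNilpotent (algebraMap R (Localization p.asIdeal.primeCompl) g) := by
    have h2 := IsLocalization.AtPrime.radical_map_of_mem_minimalPrimes
      (A := Localization.AtPrime p.asIdeal) p.asIdeal ⊥ hp
    have h3 : algebraMap R (Localization.AtPrime p.asIdeal) g ∈
        ((⊥ : Ideal R).map (algebraMap R (Localization.AtPrime p.asIdeal))).radical :=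
      h2 ▸ Ideal.mem_map_of_mem _ hg
    obtain ⟨n, hn⟩ := h3
    exact ⟨n, by simpa [Ideal.map_bot] using hn⟩
  rw [← map_pow] at hn
  obtain ⟨m, hm⟩ := (IsLocalization.map_eq_zero_iff p.asIdeal.primeCompl _ _).mp hn
  exact ⟨m, m.2, n, hm⟩

/-- Let `R` be a commutative ring, `p` a minimal prime of `R`, and `U` a quasi-compact
Zariski-open subset of `Spec R` with `p ∉ U`. Then there is `f ∈ R \ p` with
`D(f) ∩ U = ∅`. -/
theorem stmt0 {R : Type*} [CommRing R] (p : PrimeSpectrum R)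
    (hp : p.asIdeal ∈ minimalPrimes R) (U : Set (PrimeSpectrum R))
    (hUopen : IsOpen U) (hUcpt : IsCompact U) (hpU : p ∉ U) :
    ∃ f : R, f ∉ p.asIdeal ∧ (PrimeSpectrum.basicOpen f : Set (PrimeSpectrum R)) ∩ U = ∅ := by
  obtain ⟨t, ht⟩ := isCompact_isOpen_iff.mp ⟨hUcpt, hUopen⟩
  have hpt : (t : Set R) ⊆ p.asIdeal := by
    have : p ∈ zeroLocus (t : Set R) := by
      by_contra h
      exact hpU (ht ▸ h)
    exact this
  have H : ∀ g ∈ t, ∃ s, s ∉ p.asIdeal ∧ ∃ n : ℕ, s * g ^ n = 0 :=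
    fun g hg => aux_key p hp (hpt hg)
  choose s hs n hn using H
  refine ⟨∏ g ∈ t.attach, s g g.2, ?_, ?_⟩
  · exact Submonoid.prod_mem p.asIdeal.primeCompl fun g _ => hs g g.2
  · ext q
    simp only [Set.mem_inter_iff, Set.mem_empty_iff_false, iff_false, not_and]
    intro hq hqU
    rw [← ht] at hqU
    simp only [Set.mem_compl_iff, mem_zeroLocus, Set.not_subset] at hqU
    obtain ⟨g, hgt, hgq⟩ := hqU
    have hdvd : s g hgt ∣ ∏ x ∈ t.attach, s x x.2 :=
      Finset.dvd_prod_of_mem _ (Finset.mem_attach t ⟨g, hgt⟩)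
    have hfq : (∏ x ∈ t.attach, s x x.2) ∉ q.asIdeal := hq
    have hsq : s g hgt ∉ q.asIdeal := fun h => hfq (Ideal.mem_of_dvd _ hdvd h)
    have : s g hgt * g ^ n g hgt ∈ q.asIdeal := by rw [hn]; exact q.asIdeal.zero_mem
    rcases q.isPrime.mem_or_mem this with h | h
    · exact hsq h
    · exact hgq (q.isPrime.mem_of_pow_mem _ h)
end

section
/- Let R be a commutative ring. The set Min(R) of minimal prime ideals of R, equipped with the subspace topology induced from the Zariski topology on Spec(R), is a Hausdorff and totally disconnected topological space. -/
open PrimeSpectrum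

/-- If `f` lies in a minimal prime `p`, then `g * f ^ n = 0` for some `g ∉ p`. -/
lemma exists_mul_pow_eq_zero_of_mem_minimal {R : Type*} [CommRing R] {p : Ideal R}
    (hp : p ∈ minimalPrimes R) [p.IsPrime] {f : R} (hf : f ∈ p) :
    ∃ (n : ℕ) (g : R), g ∉ p ∧ g * f ^ n = 0 := by
  set S := Localization p.primeCompl
  have hx : IsNilpotent (algebraMap R S f) := by
    have := Ring.KrullDimLE.of_isLocalization p hp S
    rw [Ring.KrullDimLE.isNilpotent_iff_mem_maximalIdeal]
    exact (IsLocalization.AtPrime.to_map_mem_maximal_iff S p f).mpr hf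
  obtain ⟨n, hn⟩ := hx
  rw [← map_pow, ← map_zero (algebraMap R S), IsLocalization.eq_iff_exists p.primeCompl] at hn
  obtain ⟨⟨g, hg⟩, hgn⟩ := hn
  exact ⟨n, g, hg, by simpa [mul_comm] using hgn⟩

/-- The minimal spectrum of a commutative ring `R`, with the subspace topology induced
from the Zariski topology on `Spec R`, is Hausdorff and totally disconnected. -/
theorem stmt1 (R : Type*) [CommRing R] :
    T2Space {p : PrimeSpectrum R // p.asIdeal ∈ minimalPrimes R} ∧
      TotallyDisconnectedSpace {p : PrimeSpectrum R // p.asIdeal ∈ minimalPrimes R} := by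
  have hsep : TotallySeparatedSpace {p : PrimeSpectrum R // p.asIdeal ∈ minimalPrimes R} := by
    constructor
    intro x _ y _ hxy
    have hxy' : x.1.asIdeal ≠ y.1.asIdeal := by
      intro h
      exact hxy (Subtype.ext (PrimeSpectrum.ext h))
    -- x's ideal is not contained in y's ideal (minimal primes are incomparable)
    have hnle : ¬ x.1.asIdeal ≤ y.1.asIdeal := by
      intro hle
      have hy : Minimal (fun q : Ideal R ↦ q.IsPrime ∧ ⊥ ≤ q) y.1.asIdeal := y.2
      exact hxy' (hy.eq_of_le ⟨x.1.isPrime, bot_le⟩ hle)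
    obtain ⟨f, hfx, hfy⟩ := Set.not_subset.mp hnle
    refine ⟨Subtype.val ⁻¹' (zeroLocus {f}), Subtype.val ⁻¹' (basicOpen f : Set (PrimeSpectrum R)),
      ?_, (isOpen_basicOpen.preimage continuous_subtype_val), by simpa using hfx,
      by simpa using hfy, ?_, ?_⟩
    · -- zeroLocus {f} restricted to minimal primes is open
      have : (Subtype.val : {p : PrimeSpectrum R // p.asIdeal ∈ minimalPrimes R} →
            PrimeSpectrum R) ⁻¹' (zeroLocus {f} : Set (PrimeSpectrum R))
          = Subtype.val ⁻¹' (⋃ (g : R) (n : ℕ) (_ : g * f ^ n = 0),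
              (basicOpen g : Set (PrimeSpectrum R))) := by
        ext ⟨r, hr⟩
        simp only [Set.mem_preimage, mem_zeroLocus, Set.singleton_subset_iff, SetLike.mem_coe,
          Set.mem_iUnion, PrimeSpectrum.mem_basicOpen]
        constructor
        · intro hfr
          obtain ⟨n, g, hg, hgf⟩ := exists_mul_pow_eq_zero_of_mem_minimal hr hfr
          exact ⟨g, n, hgf, hg⟩
        · rintro ⟨g, n, hgf, hg⟩
          have : g * f ^ n ∈ r.asIdeal := hgf ▸ r.asIdeal.zero_mem
          rcases r.isPrime.mem_or_mem this with h | h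
          · exact absurd h hg
          · exact r.isPrime.mem_of_pow_mem n h
      rw [this]
      refine (isOpen_iUnion fun g => isOpen_iUnion fun n => isOpen_iUnion fun _ =>
        isOpen_basicOpen).preimage continuous_subtype_val
    · -- union is everything
      rw [← Set.preimage_union]
      have : (zeroLocus {f} : Set (PrimeSpectrum R)) ∪ (basicOpen f : Set (PrimeSpectrum R))
          = Set.univ := by
        ext r
        simp only [Set.mem_union, mem_zeroLocus, Set.singleton_subset_iff, SetLike.mem_coe,
          PrimeSpectrum.mem_basicOpen, Set.mem_univ, iff_true]
        exact or_not
      rw [this]; simp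
    · -- disjoint
      rw [Set.disjoint_iff]
      rintro ⟨r, hr⟩ ⟨h1, h2⟩
      simp only [Set.mem_preimage, mem_zeroLocus, Set.singleton_subset_iff, SetLike.mem_coe,
        PrimeSpectrum.mem_basicOpen] at h1 h2
      exact h2 h1
  exact ⟨inferInstance, inferInstance⟩
end

section
/- Let R be a commutative ring and f ∈ R. Then Min(R) ∩ D(f) is a clopen (both closed and open) subset of Min(R), where Min(R) carries the subspace topology induced from the Zariski topology on Spec(R). -/
/-- For a commutative ring `R` and `f ∈ R`, the set `Min(R) ∩ D(f)` is a clopen subset of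
`Min(R)` with the subspace topology induced from the Zariski topology on `Spec R`. -/
theorem stmt2 {R : Type*} [CommRing R] (f : R) :
    IsClopen ((Subtype.val : {p : PrimeSpectrum R // p.asIdeal ∈ minimalPrimes R} →
        PrimeSpectrum R) ⁻¹' (PrimeSpectrum.basicOpen f : Set (PrimeSpectrum R))) := by
  constructor
  · have heq : ((Subtype.val : {p : PrimeSpectrum R // p.asIdeal ∈ minimalPrimes R} →
        PrimeSpectrum R) ⁻¹' (PrimeSpectrum.basicOpen f : Set (PrimeSpectrum R)))
        = Subtype.val ⁻¹' (PrimeSpectrum.zeroLocus {g : R | ∃ n : ℕ, g * f ^ n = 0}) := by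
      ext p
      haveI : p.1.asIdeal.IsPrime := p.1.isPrime
      simp only [Set.mem_preimage, PrimeSpectrum.mem_basicOpen, PrimeSpectrum.mem_zeroLocus,
        Set.subset_def, Set.mem_setOf_eq, SetLike.mem_coe]
      constructor
      · rintro hf g ⟨n, hn⟩
        have hmem : g * f ^ n ∈ p.1.asIdeal := by rw [hn]; exact zero_mem _
        rcases p.1.isPrime.mem_or_mem hmem with h | h
        · exact h
        · exact absurd (p.1.isPrime.mem_of_pow_mem _ h) hf
      · intro hS hf
        have hnil : IsNilpotent (algebraMap R (Localization p.1.asIdeal.primeCompl) f) :=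
          by
            have hsub := IsLocalization.subsingleton_primeSpectrum_of_mem_minimalPrimes
              p.1.asIdeal p.2 (Localization.AtPrime p.1.asIdeal)
            rw [← mem_nilradical, nilradical, Ideal.radical_eq_sInf, Ideal.mem_sInf]
            rintro J ⟨-, hJ⟩
            have hJm := congrArg PrimeSpectrum.asIdeal (Subsingleton.elim
              (⟨J, hJ⟩ : PrimeSpectrum (Localization.AtPrime p.1.asIdeal))
              ⟨IsLocalRing.maximalIdeal _, inferInstance⟩)
            rw [show J = IsLocalRing.maximalIdeal _ from hJm]
            exact (IsLocalization.AtPrime.to_map_mem_maximal_iff _ p.1.asIdeal f).2 hf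
        obtain ⟨n, hn⟩ := hnil
        rw [← map_pow] at hn
        obtain ⟨s, hs⟩ := (IsLocalization.map_eq_zero_iff p.1.asIdeal.primeCompl _ _).1 hn
        exact s.2 (hS s ⟨n, hs⟩)
    rw [heq]
    exact (PrimeSpectrum.isClosed_zeroLocus _).preimage continuous_subtype_val
  · exact (PrimeSpectrum.basicOpen f).isOpen.preimage continuous_subtype_val
end

section
/- Let R be a commutative ring, let m be a maximal ideal of R, and let U be a quasi-compact open subset of Spec(R) in the flat topology such that m ∉ U. Then there exists an element f ∈ m such that V(f) ∩ U = ∅. -/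
/-- The flat (inverse) topology on `Spec R`: the topology generated by the sub-basis
consisting of the sets `V(f) = {p : f ∈ p}` for `f ∈ R`. -/
def flatTopology (R : Type*) [CommRing R] : TopologicalSpace (PrimeSpectrum R) :=
  TopologicalSpace.generateFrom
    {U : Set (PrimeSpectrum R) | ∃ f : R, U = PrimeSpectrum.zeroLocus {f}}

/-- Let `m` be a maximal ideal of `R` and `U` a quasi-compact open subset of `Spec R` in the
flat topology with `m ∉ U`. Then there is `f ∈ m` with `V(f) ∩ U = ∅`. -/
theorem stmt3 {R : Type*} [CommRing R] (m : Ideal R) (hm : m.IsMaximal)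
    (U : Set (PrimeSpectrum R))
    (hUopen : @IsOpen _ (flatTopology R) U) (hUcpt : @IsCompact _ (flatTopology R) U)
    (hmU : (⟨m, hm.isPrime⟩ : PrimeSpectrum R) ∉ U) :
    ∃ f ∈ m, PrimeSpectrum.zeroLocus {f} ∩ U = ∅ := by
  letI := flatTopology R
  have basis := TopologicalSpace.isTopologicalBasis_of_subbasis
    (s := {V : Set (PrimeSpectrum R) | ∃ f : R, V = PrimeSpectrum.zeroLocus {f}})
    (t := flatTopology R) rfl
  have key : ∀ p : {p : PrimeSpectrum R // p ∈ U},
      ∃ f : R, f ∈ p.1.asIdeal ∧ f ∉ m := by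
    rintro ⟨p, hp⟩
    obtain ⟨B, hB, hpB, hBU⟩ := basis.exists_subset_of_mem_open hp hUopen
    obtain ⟨F, ⟨hFfin, hFsub⟩, rfl⟩ := hB
    have hmB : (⟨m, hm.isPrime⟩ : PrimeSpectrum R) ∉ ⋂₀ F := fun h => hmU (hBU h)
    simp only [Set.mem_sInter, not_forall] at hmB
    obtain ⟨V, hVF, hmV⟩ := hmB
    obtain ⟨f, rfl⟩ := hFsub hVF
    refine ⟨f, ?_, ?_⟩
    · simpa [PrimeSpectrum.mem_zeroLocus] using hpB _ hVF
    · simpa [PrimeSpectrum.mem_zeroLocus] using hmV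
  choose g hg1 hg2 using key
  have hopen : ∀ i, IsOpen (PrimeSpectrum.zeroLocus {g i}) := fun i =>
    TopologicalSpace.isOpen_generateFrom_of_mem ⟨g i, rfl⟩
  have hcover : U ⊆ ⋃ i, PrimeSpectrum.zeroLocus {g i} := fun p hp =>
    Set.mem_iUnion.2 ⟨⟨p, hp⟩, by simpa [PrimeSpectrum.mem_zeroLocus] using hg1 ⟨p, hp⟩⟩
  obtain ⟨t, ht⟩ := hUcpt.elim_finite_subcover _ hopen hcover
  have hinv : ∀ i ∈ t, ∃ r : R, r * g i - 1 ∈ m := by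
    intro i _
    obtain ⟨r, c, hc, hrc⟩ := hm.exists_inv (hg2 i)
    exact ⟨r, by rw [show r * g i - 1 = -c by linear_combination hrc]; exact m.neg_mem hc⟩
  choose r hr using hinv
  refine ⟨1 - ∏ i ∈ t.attach, r i.1 i.2 * g i.1, ?_, ?_⟩
  · -- f ∈ m : work in quotient
    have h1 : (Ideal.Quotient.mk m) (∏ i ∈ t.attach, r i.1 i.2 * g i.1) = 1 := by
      rw [map_prod]
      refine Finset.prod_eq_one ?_
      intro i _
      have h := hr i.1 i.2
      rwa [← Ideal.Quotient.eq_zero_iff_mem, map_sub, map_one, sub_eq_zero] at h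
    rw [← Ideal.Quotient.eq_zero_iff_mem, map_sub, map_one, h1, sub_self]
  · -- disjointness
    ext q
    simp only [Set.mem_inter_iff, Set.mem_empty_iff_false, iff_false, not_and]
    intro hq hqU
    have hq' : (1 : R) - ∏ i ∈ t.attach, r i.1 i.2 * g i.1 ∈ q.asIdeal := by
      simpa [PrimeSpectrum.mem_zeroLocus] using hq
    obtain ⟨i, hit, hqi⟩ := Set.mem_iUnion₂.1 (ht hqU)
    have hgi : g i ∈ q.asIdeal := by
      simpa [PrimeSpectrum.mem_zeroLocus] using hqi
    have hprod : ∏ j ∈ t.attach, r j.1 j.2 * g j.1 ∈ q.asIdeal := by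
      obtain ⟨c, hc⟩ := Finset.dvd_prod_of_mem (fun j : {x // x ∈ t} => r j.1 j.2 * g j.1)
        (Finset.mem_attach t ⟨i, hit⟩)
      rw [hc]
      exact Ideal.mul_mem_right _ _ (Ideal.mul_mem_left _ _ hgi)
    have : (1 : R) ∈ q.asIdeal := by
      have := q.asIdeal.add_mem hq' hprod
      simpa using this
    exact q.isPrime.ne_top (q.asIdeal.eq_top_iff_one.2 this)
end

section
/- Let R be a commutative ring. The set Max(R) of maximal ideals of R, equipped with the subspace topology induced from the flat topology on Spec(R), is a Hausdorff and totally disconnected topological space. -/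
/-- The maximal spectrum of a commutative ring `R`, with the subspace topology induced from
the flat topology on `Spec R`, is Hausdorff and totally disconnected. -/
theorem stmt4 (R : Type*) [CommRing R] :
    @T2Space {p : PrimeSpectrum R // p.asIdeal.IsMaximal}
      (TopologicalSpace.induced Subtype.val (flatTopology R)) ∧
    @TotallyDisconnectedSpace {p : PrimeSpectrum R // p.asIdeal.IsMaximal}
      (TopologicalSpace.induced Subtype.val (flatTopology R)) := by
  letI : TopologicalSpace (PrimeSpectrum R) := flatTopology R
  letI : TopologicalSpace {p : PrimeSpectrum R // p.asIdeal.IsMaximal} :=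
    TopologicalSpace.induced Subtype.val (flatTopology R)
  -- basic opens are open
  have hbasic : ∀ f : R,
      IsOpen (Subtype.val ⁻¹' (PrimeSpectrum.zeroLocus {f}) :
        Set {p : PrimeSpectrum R // p.asIdeal.IsMaximal}) := by
    intro f
    exact isOpen_induced (TopologicalSpace.isOpen_generateFrom_of_mem ⟨f, rfl⟩)
  have hsep : TotallySeparatedSpace {p : PrimeSpectrum R // p.asIdeal.IsMaximal} := by
    constructor
    intro x _ y _ hxy
    -- find f ∈ x \ y
    have hne : x.1.asIdeal ≠ y.1.asIdeal := by
      intro h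
      exact hxy (Subtype.ext (PrimeSpectrum.ext h))
    have hle : ¬ x.1.asIdeal ≤ y.1.asIdeal := by
      intro h
      exact hne (x.2.eq_of_le y.2.ne_top h)
    obtain ⟨f, hfx, hfy⟩ := Set.not_subset.mp hle
    set u : Set {p : PrimeSpectrum R // p.asIdeal.IsMaximal} :=
      Subtype.val ⁻¹' (PrimeSpectrum.zeroLocus {f}) with hu
    refine ⟨u, uᶜ, hbasic f, ?_, ?_, ?_, ?_, disjoint_compl_right⟩
    · -- uᶜ is open
      rw [isOpen_iff_forall_mem_open]
      intro m hm
      have hfm : f ∉ m.1.asIdeal := by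
        intro hf
        exact hm (by simpa [hu, PrimeSpectrum.mem_zeroLocus] using hf)
      obtain ⟨r, g, hg, hrg⟩ := m.2.exists_inv hfm
      refine ⟨Subtype.val ⁻¹' (PrimeSpectrum.zeroLocus {g}), ?_, hbasic g, ?_⟩
      · intro m' hm' hmem
        have hfm' : f ∈ m'.1.asIdeal := by
          simpa [hu, PrimeSpectrum.mem_zeroLocus] using hmem
        have hgm' : g ∈ m'.1.asIdeal := by
          simpa [PrimeSpectrum.mem_zeroLocus] using hm'
        have : (1 : R) ∈ m'.1.asIdeal := by
          rw [← hrg]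
          exact Ideal.add_mem _ (Ideal.mul_mem_left _ _ hfm') hgm'
        exact m'.1.isPrime.ne_top (Ideal.eq_top_iff_one _ |>.mpr this)
      · simpa [PrimeSpectrum.mem_zeroLocus] using hg
    · simpa [hu, PrimeSpectrum.mem_zeroLocus] using hfx
    · simpa [hu, PrimeSpectrum.mem_zeroLocus] using hfy
    · simp [Set.union_compl_self]
  exact ⟨hsep.t2Space, inferInstance⟩
end

section
/- Let R be a commutative ring and f ∈ R. Then Max(R) ∩ V(f) is a clopen (both closed and open) subset of Max(R), where Max(R) carries the subspace topology induced from the flat topology on Spec(R). -/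
/-- For a commutative ring `R` and `f ∈ R`, the set `Max(R) ∩ V(f)` is a clopen subset of
`Max(R)` with the subspace topology induced from the flat topology on `Spec R`. -/
theorem stmt5 {R : Type*} [CommRing R] (f : R) :
    @IsClopen {p : PrimeSpectrum R // p.asIdeal.IsMaximal}
      (TopologicalSpace.induced Subtype.val (flatTopology R))
      (Subtype.val ⁻¹' PrimeSpectrum.zeroLocus {f}) := by
  letI : TopologicalSpace (PrimeSpectrum R) := flatTopology R
  have hbasic : ∀ g : R, IsOpen (PrimeSpectrum.zeroLocus ({g} : Set R)) := fun g =>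
    TopologicalSpace.GenerateOpen.basic _ ⟨g, rfl⟩
  constructor
  · rw [← isOpen_compl_iff]
    have heq : (Subtype.val ⁻¹' PrimeSpectrum.zeroLocus {f} :
        Set {p : PrimeSpectrum R // p.asIdeal.IsMaximal})ᶜ
        = Subtype.val ⁻¹' (⋃ g : R, PrimeSpectrum.zeroLocus {1 - f * g}) := by
      ext p
      simp only [Set.mem_compl_iff, Set.mem_preimage, Set.mem_iUnion,
        PrimeSpectrum.mem_zeroLocus, Set.singleton_subset_iff, SetLike.mem_coe]
      constructor
      · intro hf
        obtain ⟨y, i, hi, hyi⟩ := p.2.exists_inv hf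
        refine ⟨y, ?_⟩
        have : (1 : R) - f * y = i := by linear_combination -hyi
        rw [this]; exact hi
      · rintro ⟨g, hg⟩ hf
        have h1 : (1 : R) ∈ p.1.asIdeal := by
          have := p.1.asIdeal.add_mem hg (p.1.asIdeal.mul_mem_right g hf)
          simpa using this
        exact p.1.isPrime.ne_top (Ideal.eq_top_of_isUnit_mem _ h1 isUnit_one)
    rw [heq]
    exact (isOpen_iUnion fun g => hbasic _).preimage continuous_induced_dom
  · exact (hbasic f).preimage continuous_induced_dom
end

section
/- Let R be a commutative ring. The set Max(R) of maximal ideals of R is compact with respect to the subspace topology induced from the flat topology on Spec(R) if and only if the quotient ring R/J(R) is absolutely flat, where J(R) is the Jacobson radical of R. -/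
/-- The maximal spectrum of a commutative ring `R` is compact with respect to the flat
topology if and only if `R / J(R)` is absolutely flat (von Neumann regular), where `J(R)`
is the Jacobson radical of `R`. -/
theorem stmt6 (R : Type*) [CommRing R] :
    @IsCompact _ (flatTopology R) {p : PrimeSpectrum R | p.asIdeal.IsMaximal} ↔
      ∀ a : R ⧸ (⊥ : Ideal R).jacobson, ∃ b, a = a ^ 2 * b := by
  classical
  constructor
  · intro hc a
    obtain ⟨a, rfl⟩ := Ideal.Quotient.mk_surjective a
    -- cover Max by V(a) and V(1 - a*x) for x : R
    let U : Option R → Set (PrimeSpectrum R) := fun o =>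
      Option.rec (PrimeSpectrum.zeroLocus {a}) (fun x => PrimeSpectrum.zeroLocus {1 - a * x}) o
    have hUopen : ∀ o, @IsOpen _ (flatTopology R) (U o) := by
      intro o
      cases o with
      | none => exact TopologicalSpace.GenerateOpen.basic _ ⟨a, rfl⟩
      | some x => exact TopologicalSpace.GenerateOpen.basic _ ⟨1 - a * x, rfl⟩
    have hcover : {p : PrimeSpectrum R | p.asIdeal.IsMaximal} ⊆ ⋃ o, U o := by
      intro p hp
      by_cases ha : a ∈ p.asIdeal
      · exact Set.mem_iUnion.2 ⟨none, by simpa [U, PrimeSpectrum.mem_zeroLocus]⟩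
      · obtain ⟨c, i, hi, hci⟩ := (hp : p.asIdeal.IsMaximal).exists_inv ha
        refine Set.mem_iUnion.2 ⟨some c, ?_⟩
        have : 1 - a * c ∈ p.asIdeal := by
          have : 1 - a * c = i := by linear_combination -hci
          rw [this]; exact hi
        simpa [U, PrimeSpectrum.mem_zeroLocus]
    obtain ⟨t, ht⟩ := @IsCompact.elim_finite_subcover (PrimeSpectrum R) (flatTopology R) {p : PrimeSpectrum R | p.asIdeal.IsMaximal} (Option R) hc U hUopen hcover
    set s : Finset R := t.eraseNone with hs
    set c : R := ∏ x ∈ s, (1 - a * x) with hcdef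
    have key : ∀ m : Ideal R, m.IsMaximal → a * c ∈ m := by
      intro m hm
      have hp : (⟨m, hm.isPrime⟩ : PrimeSpectrum R) ∈ ⋃ o ∈ t, U o := ht hm
      obtain ⟨o, hot, hpo⟩ := Set.mem_iUnion₂.1 hp
      cases o with
      | none =>
        have : a ∈ m := by simpa [U, PrimeSpectrum.mem_zeroLocus] using hpo
        exact Ideal.mul_mem_right _ _ this
      | some x =>
        have hxm : 1 - a * x ∈ m := by simpa [U, PrimeSpectrum.mem_zeroLocus] using hpo
        have hxs : x ∈ s := Finset.mem_eraseNone.2 hot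
        have : c ∈ m := by
          rw [hcdef, ← Finset.mul_prod_erase s _ hxs]
          exact Ideal.mul_mem_right _ _ hxm
        exact Ideal.mul_mem_left _ _ this
    have hJ : a * c ∈ (⊥ : Ideal R).jacobson := by
      rw [Ideal.jacobson, Ideal.mem_sInf]
      rintro m ⟨-, hm⟩
      exact key m hm
    have hy : ∀ u : Finset R, ∃ y : R, ∏ x ∈ u, (1 - a * x) = 1 - a * y := by
      intro u
      induction u using Finset.induction with
      | empty => exact ⟨0, by simp⟩
      | @insert x u hxu ih =>
        obtain ⟨y, hyy⟩ := ih
        refine ⟨x + y - a * x * y, ?_⟩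
        rw [Finset.prod_insert hxu, hyy]; ring
    obtain ⟨y, hyy⟩ := hy s
    refine ⟨Ideal.Quotient.mk _ y, ?_⟩
    rw [← map_pow, ← map_mul, Ideal.Quotient.eq]
    have : a - a ^ 2 * y = a * c := by rw [hcdef, hyy]; ring
    rw [this]; exact hJ
  · intro hreg
    set J := (⊥ : Ideal R).jacobson with hJdef
    set π := Ideal.Quotient.mk J with hπ
    set φ : PrimeSpectrum (R ⧸ J) → PrimeSpectrum R := (PrimeSpectrum.comap π) with hφ
    have hcont : @Continuous _ _ _ (flatTopology R) φ := by
      rw [flatTopology, continuous_generateFrom_iff]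
      rintro U ⟨f, rfl⟩
      have h1 : φ ⁻¹' PrimeSpectrum.zeroLocus {f} = PrimeSpectrum.zeroLocus {π f} := by
        rw [hφ, PrimeSpectrum.preimage_comap_zeroLocus, Set.image_singleton]
      rw [h1]
      obtain ⟨b, hb⟩ := hreg (π f)
      have h2 : PrimeSpectrum.zeroLocus {π f} = ↑(PrimeSpectrum.basicOpen (1 - π f * b)) := by
        ext p
        simp only [PrimeSpectrum.mem_zeroLocus, Set.singleton_subset_iff, SetLike.mem_coe,
          PrimeSpectrum.basicOpen_eq_zeroLocus_compl, Set.mem_compl_iff]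
        constructor
        · intro hf hcon
          have h1p : (1 : R ⧸ J) ∈ p.asIdeal := by
            have := p.asIdeal.add_mem hcon (p.asIdeal.mul_mem_right b hf)
            simpa using this
          exact p.isPrime.ne_top (p.asIdeal.eq_top_iff_one.2 h1p)
        · intro h
          have hz : π f * b * (1 - π f * b) = 0 := by
            linear_combination b * hb
          have hmem : π f * b * (1 - π f * b) ∈ p.asIdeal := by rw [hz]; exact p.asIdeal.zero_mem
          rcases p.isPrime.mem_or_mem hmem with h1 | h1
          · have : π f = π f * (π f * b) := by linear_combination hb
            rw [this]; exact p.asIdeal.mul_mem_left _ h1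
          · exact absurd h1 (by simpa [PrimeSpectrum.mem_zeroLocus] using h)
      rw [h2]
      exact (PrimeSpectrum.basicOpen _).isOpen
    have himg : φ '' Set.univ = {p : PrimeSpectrum R | p.asIdeal.IsMaximal} := by
      rw [Set.image_univ, hφ, range_comap_of_surjective _ π
        Ideal.Quotient.mk_surjective]
      have hker : RingHom.ker π = J := Ideal.mk_ker
      rw [hker]
      ext p
      simp only [PrimeSpectrum.mem_zeroLocus, SetLike.coe_subset_coe, Set.mem_setOf_eq]
      constructor
      · intro hJp
        obtain ⟨m, hm, hpm⟩ := p.asIdeal.exists_le_maximal p.isPrime.ne_top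
        have hmp : m ≤ p.asIdeal := by
          intro x hx
          obtain ⟨b, hb⟩ := hreg (π x)
          obtain ⟨b, rfl⟩ := Ideal.Quotient.mk_surjective b
          have hxJ : x - x ^ 2 * b ∈ J := by
            rw [← Ideal.Quotient.eq]
            rw [hb, ← map_pow, ← map_mul]
          have hxp : x * (1 - x * b) ∈ p.asIdeal := by
            have := hJp hxJ
            rwa [show x - x ^ 2 * b = x * (1 - x * b) by ring] at this
          rcases p.isPrime.mem_or_mem hxp with h | h
          · exact h
          · exfalso
            have h1 : (1 : R) ∈ m := by
              have := m.add_mem (hpm h) (m.mul_mem_right b hx)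
              simpa using this
            exact hm.ne_top (m.eq_top_iff_one.2 h1)
        have : p.asIdeal = m := le_antisymm hpm hmp
        rw [this]; exact hm
      · intro hp
        rw [hJdef, Ideal.jacobson]
        exact sInf_le ⟨bot_le, hp⟩
    have hcomp := @IsCompact.image (PrimeSpectrum (R ⧸ J)) (PrimeSpectrum R) _ (flatTopology R) Set.univ φ CompactSpace.isCompact_univ hcont
    rwa [himg] at hcomp
end

section
/- Let φ: R → A be an injective flat ring map between commutative rings with A absolutely flat. Then there exist a commutative ring B, an injective flat ring map ψ: R → B which is an epimorphism of rings, and an injective ring map i: B → A, such that B is absolutely flat and φ = i ∘ ψ. -/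
universe u

open TensorProduct Function

set_option maxHeartbeats 1000000
set_option synthInstance.maxHeartbeats 400000

/-- Uniqueness of the group inverse in a commutative ring. -/
theorem aux_qinv_unique {C : Type*} [CommRing C] {a c d : C} (h1 : a ^ 2 * c = a)
    (h2 : c ^ 2 * a = c) (h3 : a ^ 2 * d = a) (h4 : d ^ 2 * a = d) : c = d := by
  have hc : c = c * a * d := by
    calc c = c ^ 2 * a := h2.symm
    _ = c ^ 2 * (a ^ 2 * d) := by rw [h3]
    _ = c * (a ^ 2 * c) * d := by ring
    _ = c * a * d := by rw [h1]
  have hd : d = d * a * c := by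
    calc d = d ^ 2 * a := h4.symm
    _ = d ^ 2 * (a ^ 2 * c) := by rw [h1]
    _ = d * (a ^ 2 * d) * c := by ring
    _ = d * a * c := by rw [h3]
  calc c = c * a * d := hc
  _ = d * a * c := by ring
  _ = d := hd.symm

section VNR

variable {B : Type*} [CommRing B] (hv : ∀ b : B, ∃ c, b = b ^ 2 * c)

include hv

theorem aux_span_singleton_idem (a : B) :
    ∃ e : B, e * e = e ∧ Ideal.span {a} = Ideal.span {e} := by
  obtain ⟨c, hc⟩ := hv a
  refine ⟨a * c, ?_, le_antisymm ?_ ?_⟩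
  · linear_combination (-c) * hc
  · rw [Ideal.span_singleton_le_span_singleton]
    exact ⟨a, by linear_combination hc⟩
  · rw [Ideal.span_singleton_le_span_singleton]
    exact ⟨c, rfl⟩

theorem aux_fg_idem (I : Ideal B) (hI : I.FG) :
    ∃ e : B, e * e = e ∧ I = Ideal.span {e} := by
  obtain ⟨s, rfl⟩ := hI
  classical
  induction s using Finset.induction_on with
  | empty =>
    refine ⟨0, by ring, ?_⟩
    rw [Finset.coe_empty, Ideal.span_empty, Ideal.span_singleton_eq_bot.mpr rfl]
  | @insert a s ha ih =>
    obtain ⟨f, hf, hspanf⟩ := ih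
    obtain ⟨e, he, hspane⟩ := aux_span_singleton_idem hv a
    refine ⟨e + f - e * f,
      by linear_combination (1 - 2*f + f*f) * he + (1 - e) * hf, ?_⟩
    rw [Finset.coe_insert, Ideal.span_insert, hspane, hspanf]
    apply le_antisymm
    · apply sup_le <;> rw [Ideal.span_singleton_le_span_singleton]
      · exact ⟨e, by linear_combination (f - 1) * he⟩
      · exact ⟨f, by linear_combination (e - 1) * hf⟩
    · rw [Ideal.span_le, Set.singleton_subset_iff]
      have heg : e ∈ Ideal.span {e} ⊔ Ideal.span {f} := Ideal.mem_sup_left (Ideal.subset_span rfl)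
      have hfg : f ∈ Ideal.span {e} ⊔ Ideal.span {f} := Ideal.mem_sup_right (Ideal.subset_span rfl)
      exact sub_mem (add_mem heg hfg) (Ideal.mul_mem_right _ _ heg)

/-- Every module over a commutative von Neumann regular ring is flat. -/
theorem aux_vnr_flat (M : Type*) [AddCommGroup M] [Module B M] : Module.Flat B M := by
  rw [Module.Flat.iff_rTensor_injective]
  intro I hI
  obtain ⟨e, he, rfl⟩ := aux_fg_idem hv I hI
  set I : Ideal B := Ideal.span {e} with hIdef
  have hmem : ∀ b : B, b * e ∈ I := fun b => Ideal.mul_mem_left _ b (Ideal.subset_span rfl)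
  let r : B →ₗ[B] I :=
    { toFun := fun b => ⟨b * e, hmem b⟩
      map_add' := fun x y => by ext; simp [add_mul]
      map_smul' := fun m x => by ext; simp [smul_eq_mul]; ring }
  have hretr : r.comp I.subtype = LinearMap.id := by
    ext ⟨x, hx⟩
    obtain ⟨d, rfl⟩ := Ideal.mem_span_singleton'.mp hx
    simp only [LinearMap.coe_comp, Function.comp_apply, Submodule.coe_subtype, LinearMap.id_coe,
      id_eq, LinearMap.coe_mk, AddHom.coe_mk, r]
    show (d * e) * e = d * e
    linear_combination d * he
  have : (LinearMap.rTensor M r).comp (LinearMap.rTensor M I.subtype) = LinearMap.id := by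
    rw [← LinearMap.rTensor_comp, hretr, LinearMap.rTensor_id]
  intro x y hxy
  have h3 : ∀ z : ↥I ⊗[B] M, LinearMap.rTensor M r (LinearMap.rTensor M I.subtype z) = z := by
    intro z
    rw [← LinearMap.comp_apply, this, LinearMap.id_apply]
  have h2 := congrArg (LinearMap.rTensor M r) hxy
  rwa [h3 x, h3 y] at h2

end VNR

section VNR2

variable {B A : Type*} [CommRing B] [CommRing A] [Algebra B A]
  (hv : ∀ b : B, ∃ c, b = b ^ 2 * c) (hBA : Injective (algebraMap B A))

include hv hBA

theorem aux_faithfullyFlat : Module.FaithfullyFlat B A := by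
  rw [Module.FaithfullyFlat.iff_flat_and_ideal_smul_eq_top]
  refine ⟨aux_vnr_flat hv A, fun I hIt => ?_⟩
  classical
  set f := algebraMap B A
  have h1 : (1 : A) ∈ Ideal.map f I := by
    have h0 : (1 : A) ∈ I • (⊤ : Submodule B A) := by rw [hIt]; exact Submodule.mem_top
    rwa [Ideal.smul_top_eq_map, Submodule.restrictScalars_mem] at h0
  have h1' : (1 : A) ∈ Ideal.span (⇑f '' ↑I) := h1
  obtain ⟨T, hT, h1T⟩ := Submodule.mem_span_finite_of_mem_span h1'
  obtain ⟨S, hS, rfl⟩ := Finset.subset_set_image_iff.mp hT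
  obtain ⟨e, he, hJ⟩ := aux_fg_idem hv (Ideal.span (S : Set B)) ⟨S, rfl⟩
  have h2 : (1 : A) ∈ Ideal.map f (Ideal.span (S : Set B)) := by
    rw [Ideal.map_span]
    rw [Finset.coe_image] at h1T
    exact h1T
  rw [hJ, Ideal.map_span, Set.image_singleton, Ideal.mem_span_singleton'] at h2
  obtain ⟨u, hu⟩ := h2
  have hfe : f e * f e = f e := by rw [← map_mul, he]
  have hfe1 : f e = (1 : A) := by
    calc f e = f e * (u * f e) := by rw [hu, mul_one]
    _ = u * (f e * f e) := by ring
    _ = u * f e := by rw [hfe]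
    _ = 1 := hu
  have he1 : e = 1 := hBA (by rw [hfe1, map_one])
  rw [Ideal.eq_top_iff_one]
  have : (1 : B) ∈ Ideal.span (S : Set B) := by
    rw [hJ, he1]; exact Ideal.subset_span rfl
  exact Ideal.span_le.mpr hS this

theorem aux_oneTmul_inj (M : Type*) [AddCommGroup M] [Module B M] (m : M)
    (h : (1 : A) ⊗ₜ[B] m = 0) : m = 0 := by
  by_contra hm
  haveI : Module.Flat B A := aux_vnr_flat hv A
  haveI : Module.FaithfullyFlat B A := aux_faithfullyFlat hv hBA
  set N : Submodule B M := Submodule.span B {m} with hN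
  haveI : Nontrivial N := by
    refine ⟨⟨m, Submodule.subset_span rfl⟩, 0, fun hc => hm ?_⟩
    simpa using congrArg Subtype.val hc
  haveI : Nontrivial (A ⊗[B] N) := Module.FaithfullyFlat.lTensor_nontrivial B A N
  have hzero : ∀ x : A ⊗[B] N, x = 0 := by
    have hmN : ((1 : A) ⊗ₜ[B] (⟨m, Submodule.subset_span rfl⟩ : N) : A ⊗[B] N) = 0 := by
      apply Module.Flat.lTensor_preserves_injective_linearMap (M := A) N.subtype
        (Submodule.injective_subtype N)
      simpa using h
    intro x
    induction x with
    | zero => rfl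
    | add x y hx hy => rw [hx, hy, add_zero]
    | tmul a n =>
      obtain ⟨n, hn⟩ := n
      obtain ⟨b, rfl⟩ := Submodule.mem_span_singleton.mp hn
      have h3 : (⟨b • m, hn⟩ : N) = b • ⟨m, Submodule.subset_span rfl⟩ := rfl
      have h4 : ((b • a : A)) ⊗ₜ[B] (⟨m, Submodule.subset_span rfl⟩ : N)
          = (b • a : A) • ((1 : A) ⊗ₜ[B] (⟨m, Submodule.subset_span rfl⟩ : N)) := by
        rw [smul_tmul', smul_eq_mul, mul_one]
      rw [h3, tmul_smul, smul_tmul', h4, hmN, smul_zero]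
  obtain ⟨x, y, hxy⟩ := exists_pair_ne (A ⊗[B] N)
  exact hxy ((hzero x).trans (hzero y).symm)

end VNR2

/-- Flatness descends along an injective map into a von Neumann regular overring. -/
theorem aux_flat_descend {R B A : Type*} [CommRing R] [CommRing B] [CommRing A]
    [Algebra R B] [Algebra R A] [Algebra B A] [IsScalarTower R B A]
    (hBA : Injective (algebraMap B A)) (hv : ∀ b : B, ∃ c, b = b ^ 2 * c)
    [Module.Flat R A] : Module.Flat R B := by
  rw [Module.Flat.iff_rTensor_injective']
  intro I
  set j : B →ₗ[R] A := (IsScalarTower.toAlgHom R B A).toLinearMap with hj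
  have key : ∀ x : ↥I ⊗[R] B, LinearMap.rTensor B I.subtype x = 0 → x = 0 := by
    intro x hx
    have hsq : LinearMap.rTensor A I.subtype (LinearMap.lTensor (↥I) j x)
        = LinearMap.lTensor R j (LinearMap.rTensor B I.subtype x) := by
      rw [← LinearMap.comp_apply, ← LinearMap.comp_apply,
        LinearMap.rTensor_comp_lTensor, LinearMap.lTensor_comp_rTensor]
    rw [hx, map_zero] at hsq
    have hinjA : Function.Injective (LinearMap.rTensor A I.subtype) :=
      Module.Flat.rTensor_preserves_injective_linearMap (M := A) I.subtype
        (Submodule.injective_subtype I)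
    have hκx : LinearMap.lTensor (↥I) j x = 0 := by
      apply hinjA
      rw [hsq, map_zero]
    let e := TensorProduct.AlgebraTensorModule.cancelBaseChange R B B A (↥I)
    have hcomm : ∀ z : ↥I ⊗[R] B,
        e ((1 : A) ⊗ₜ[B] (TensorProduct.comm R (↥I) B z))
          = TensorProduct.comm R (↥I) A (LinearMap.lTensor (↥I) j z) := by
      intro z
      induction z with
      | zero => simp
      | add u v hu hv => simp only [map_add, tmul_add, hu, hv]
      | tmul n b =>
        simp [e, j, Algebra.smul_def]
    have h1z : (1 : A) ⊗ₜ[B] (TensorProduct.comm R (↥I) B x) = 0 := by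
      apply e.injective
      rw [hcomm, hκx, map_zero, map_zero]
    have h0 := aux_oneTmul_inj hv hBA _ _ h1z
    exact (TensorProduct.comm R (↥I) B).injective (by simpa using h0)
  intro x y hxy
  have h5 : LinearMap.rTensor B I.subtype (x - y) = 0 := by
    rw [map_sub, hxy, sub_self]
  have h6 := key _ h5
  rwa [sub_eq_zero] at h6

/-- The closure of the image of `φ` under ring operations and the quasi-inverse map `q`. -/
inductive Cl {R A : Type u} [CommRing R] [CommRing A] (φ : R →+* A) (q : A → A) : A → Prop
  | base (r : R) : Cl φ q (φ r)
  | add {a b : A} : Cl φ q a → Cl φ q b → Cl φ q (a + b)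
  | neg {a : A} : Cl φ q a → Cl φ q (-a)
  | mul {a b : A} : Cl φ q a → Cl φ q b → Cl φ q (a * b)
  | qcl {a : A} : Cl φ q a → Cl φ q (q a)

/-- The closure of the image of `φ` under the quasi-inverse map `q`, as a subring. -/
def clSubring {R A : Type u} [CommRing R] [CommRing A] (φ : R →+* A) (q : A → A) : Subring A where
  carrier := {a | Cl φ q a}
  one_mem' := by simpa using Cl.base (φ := φ) (q := q) 1
  zero_mem' := by simpa using Cl.base (φ := φ) (q := q) 0
  add_mem' := Cl.add
  mul_mem' := Cl.mul
  neg_mem' := Cl.neg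

/-- Every injective flat ring map `φ : R → A` with `A` absolutely flat factors as an
injective flat ring epimorphism `ψ : R → B` followed by an injective ring map `i : B → A`,
with `B` absolutely flat. -/
theorem stmt9 {R A : Type u} [CommRing R] [CommRing A] (φ : R →+* A)
    (hinj : Function.Injective φ) (hflat : φ.Flat)
    (hA : ∀ a : A, ∃ b : A, a = a ^ 2 * b) :
    ∃ (B : Type u) (_ : CommRing B) (ψ : R →+* B) (i : B →+* A),
      Function.Injective ψ ∧ ψ.Flat ∧
      (∀ (C : Type u) [CommRing C] (g h : B →+* C), g.comp ψ = h.comp ψ → g = h) ∧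
      (∀ b : B, ∃ c : B, b = b ^ 2 * c) ∧
      Function.Injective i ∧
      i.comp ψ = φ := by
  classical
  set q : A → A := fun a => a * (Classical.choose (hA a)) ^ 2 with hqdef
  have hq1 : ∀ a : A, a ^ 2 * q a = a := by
    intro a
    have hb := Classical.choose_spec (hA a)
    show a ^ 2 * (a * (Classical.choose (hA a)) ^ 2) = a
    set b := Classical.choose (hA a)
    linear_combination (-(a * b) - 1) * hb
  have hq2 : ∀ a : A, (q a) ^ 2 * a = q a := by
    intro a
    have hb := Classical.choose_spec (hA a)
    show (a * (Classical.choose (hA a)) ^ 2) ^ 2 * a = a * (Classical.choose (hA a)) ^ 2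
    set b := Classical.choose (hA a)
    linear_combination (-(a * b ^ 3) - b ^ 2) * hb
  set sub : Subring A := clSubring φ q with hsub
  set ψ : R →+* ↥sub := φ.codRestrict sub (fun r => Cl.base r) with hψ
  have hψval : ∀ r : R, ((ψ r : ↥sub) : A) = φ r := fun _ => rfl
  have hψinj : Function.Injective ψ := by
    intro x y hxy
    exact hinj (congrArg (Subtype.val) hxy)
  -- absolute flatness of the subring
  have hvnr : ∀ b : ↥sub, ∃ c : ↥sub, b = b ^ 2 * c := by
    rintro ⟨a, ha⟩
    refine ⟨⟨q a, Cl.qcl ha⟩, ?_⟩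
    apply Subtype.ext
    push_cast
    exact (hq1 a).symm
  -- injectivity of the inclusion
  have hival : Function.Injective (sub.subtype) := Subtype.val_injective
  refine ⟨↥sub, inferInstance, ψ, sub.subtype, hψinj, ?_, ?_, hvnr, hival, ?_⟩
  · -- flatness
    unfold RingHom.Flat
    letI : Algebra R ↥sub := ψ.toAlgebra
    letI : Algebra R A := φ.toAlgebra
    haveI : IsScalarTower R ↥sub A := IsScalarTower.of_algebraMap_eq fun r => rfl
    haveI : Module.Flat R A := hflat
    have hBA : Injective (algebraMap ↥sub A) := Subtype.val_injective
    haveI hF : Module.Flat R ↥sub := aux_flat_descend hBA hvnr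
    exact hF
  · -- epimorphism
    intro C _ g h hgh
    have hgh' : ∀ r : R, g (ψ r) = h (ψ r) := fun r => RingHom.congr_fun hgh r
    ext b
    obtain ⟨a, ha⟩ := b
    induction ha with
    | base r => exact hgh' r
    | @add a b hca hcb iha ihb =>
      have e1 : (⟨a + b, Cl.add hca hcb⟩ : ↥sub) = ⟨a, hca⟩ + ⟨b, hcb⟩ := rfl
      rw [e1, map_add, map_add, iha, ihb]
    | @neg a hca iha =>
      have e1 : (⟨-a, Cl.neg hca⟩ : ↥sub) = -⟨a, hca⟩ := rfl
      rw [e1, map_neg, map_neg, iha]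
    | @mul a b hca hcb iha ihb =>
      have e1 : (⟨a * b, Cl.mul hca hcb⟩ : ↥sub) = ⟨a, hca⟩ * ⟨b, hcb⟩ := rfl
      rw [e1, map_mul, map_mul, iha, ihb]
    | @qcl a hca iha =>
      set x : ↥sub := ⟨a, hca⟩ with hx
      set y : ↥sub := ⟨q a, Cl.qcl hca⟩ with hy
      have r1 : x ^ 2 * y = x := by
        apply Subtype.ext; push_cast; exact hq1 a
      have r2 : y ^ 2 * x = y := by
        apply Subtype.ext; push_cast; exact hq2 a
      have g1 : (g x) ^ 2 * (g y) = g x := by rw [← map_pow, ← map_mul, r1]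
      have g2 : (g y) ^ 2 * (g x) = g y := by rw [← map_pow, ← map_mul, r2]
      have h1 : (h x) ^ 2 * (h y) = h x := by rw [← map_pow, ← map_mul, r1]
      have h2 : (h y) ^ 2 * (h x) = h y := by rw [← map_pow, ← map_mul, r2]
      rw [iha] at g1 g2
      exact aux_qinv_unique g1 g2 h1 h2
  · -- factorization
    exact RingHom.ext fun r => rfl
end

section
/- Let R be a commutative ring such that Min(R) is quasi-compact with respect to the subspace topology induced from the Zariski topology on Spec(R). Then Min(R) is a closed subset of Spec(R) with respect to the patch topology. -/
/-- The patch (constructible) topology on `Spec R`: the topology generated by the sub-basis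
consisting of the sets `D(f) ∩ V(g)` for `f, g ∈ R`. -/
def patchTopology (R : Type*) [CommRing R] : TopologicalSpace (PrimeSpectrum R) :=
  TopologicalSpace.generateFrom
    {U : Set (PrimeSpectrum R) | ∃ f g : R,
      U = (PrimeSpectrum.basicOpen f : Set (PrimeSpectrum R)) ∩ PrimeSpectrum.zeroLocus {g}}

open PrimeSpectrum in
/-- Each `V(g)` is open in the patch topology. -/
lemma patch_isOpen_zeroLocus {R : Type*} [CommRing R] (g : R) :
    @IsOpen _ (patchTopology R) (zeroLocus {g} : Set (PrimeSpectrum R)) :=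
  TopologicalSpace.GenerateOpen.basic _ ⟨1, g, by simp⟩

open PrimeSpectrum in
/-- If the minimal spectrum of a commutative ring `R` is quasi-compact in the Zariski
topology, then it is a closed subset of `Spec R` with respect to the patch topology. -/
theorem stmt11 {R : Type*} [CommRing R]
    (hcpt : IsCompact {p : PrimeSpectrum R | p.asIdeal ∈ minimalPrimes R}) :
    @IsClosed _ (patchTopology R) {p : PrimeSpectrum R | p.asIdeal ∈ minimalPrimes R} := by
  classical
  rw [← @isOpen_compl_iff _ _ (patchTopology R)]
  rw [@isOpen_iff_forall_mem_open _ (patchTopology R)]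
  intro p hp
  -- find a minimal prime strictly below p
  obtain ⟨qI, hqmin, hqle⟩ :=
    Ideal.exists_minimalPrimes_le (I := (⊥ : Ideal R)) (J := p.asIdeal) bot_le
  have hqne : qI ≠ p.asIdeal := fun h => hp (show p.asIdeal ∈ minimalPrimes R from h ▸ hqmin)
  obtain ⟨f, hfp, hfq⟩ := SetLike.exists_of_lt (lt_of_le_of_ne hqle hqne)
  -- the compact set of minimal primes containing f
  set K : Set (PrimeSpectrum R) :=
    {m | m.asIdeal ∈ minimalPrimes R} ∩ zeroLocus {f} with hKdef
  have hKc : IsCompact K := hcpt.inter_right (isClosed_zeroLocus _)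
  have hcover : K ⊆ ⋃ s : qI, (basicOpen (s : R) : Set (PrimeSpectrum R)) := by
    rintro m ⟨hm, hmf⟩
    by_contra hall
    have hle : qI ≤ m.asIdeal := by
      intro s hs
      by_contra hsm
      exact hall (Set.mem_iUnion.mpr ⟨⟨s, hs⟩, hsm⟩)
    have hle2 : m.asIdeal ≤ qI := hm.2 ⟨hqmin.1.1, bot_le⟩ hle
    exact hfq (hle2 (hmf (Set.mem_singleton f)))
  obtain ⟨t, ht⟩ := hKc.elim_finite_subcover _
    (fun s : qI => (basicOpen (s : R)).isOpen) hcover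
  -- the patch-open neighborhood of p
  set F : Finset R := insert f (t.image (Subtype.val)) with hFdef
  refine ⟨⋂ g ∈ F, zeroLocus {g}, ?_, ?_, ?_⟩
  · intro m hm
    simp only [Set.mem_iInter] at hm
    intro hmmin
    have hmf : m ∈ zeroLocus ({f} : Set R) := hm f (Finset.mem_insert_self _ _)
    have hmK : m ∈ K := ⟨hmmin, hmf⟩
    obtain ⟨s, hst⟩ := Set.mem_iUnion.mp (ht hmK)
    simp only [Set.mem_iUnion] at hst
    obtain ⟨hs, hsm⟩ := hst
    have : (s : R) ∈ F := Finset.mem_insert_of_mem (Finset.mem_image_of_mem _ hs)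
    exact hsm (hm _ this (Set.mem_singleton _))
  · exact @isOpen_biInter_finset _ _ (patchTopology R) _ _
      (fun g _ => patch_isOpen_zeroLocus g)
  · refine Set.mem_iInter₂.mpr fun g hg => ?_
    rw [mem_zeroLocus, Set.singleton_subset_iff]
    rcases Finset.mem_insert.mp hg with h | h
    · exact h ▸ hfp
    · obtain ⟨s, _, rfl⟩ := Finset.mem_image.mp h
      exact hqle s.2
end

section
/- Let R be a commutative ring and let E be a subset of Spec(R). Let π: R → ∏_{p ∈ E} κ(p) be the canonical ring map into the product of the residue fields κ(p) of R at the primes p ∈ E, and let π*: Spec(∏_{p ∈ E} κ(p)) → Spec(R) be the induced map on spectra, q ↦ π⁻¹(q). Then the closure of E in Spec(R) with respect to the patch topology equals the image of π*. -/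
/-- The canonical map from `R` to the product of the residue fields `κ(p)` (the fraction
field of `R/p`) over all primes `p` in a subset `E` of `Spec R`. -/
noncomputable def residueProdMap {R : Type*} [CommRing R] (E : Set (PrimeSpectrum R)) :
    R →+* ∀ p : E, FractionRing (R ⧸ (p : PrimeSpectrum R).asIdeal) :=
  Pi.ringHom fun p =>
    (algebraMap (R ⧸ (p : PrimeSpectrum R).asIdeal)
        (FractionRing (R ⧸ (p : PrimeSpectrum R).asIdeal))).comp
      (Ideal.Quotient.mk (p : PrimeSpectrum R).asIdeal)

open Filter Set

lemma residueProdMap_apply_eq_zero_iff {R : Type*} [CommRing R] (E : Set (PrimeSpectrum R))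
    (r : R) (p : E) :
    residueProdMap E r p = 0 ↔ r ∈ (p : PrimeSpectrum R).asIdeal := by
  have hinj := IsFractionRing.injective (R ⧸ (p : PrimeSpectrum R).asIdeal)
      (FractionRing (R ⧸ (p : PrimeSpectrum R).asIdeal))
  constructor
  · intro h
    rw [← Ideal.Quotient.eq_zero_iff_mem]
    apply hinj
    rw [map_zero]
    exact h
  · intro h
    show algebraMap (R ⧸ (p : PrimeSpectrum R).asIdeal)
        (FractionRing (R ⧸ (p : PrimeSpectrum R).asIdeal)) (Ideal.Quotient.mk _ r) = 0
    rw [Ideal.Quotient.eq_zero_iff_mem.mpr h, map_zero]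

/-- For a subset `E` of `Spec R`, the closure of `E` in the patch topology equals the image
of the map on spectra induced by the canonical map `π : R → ∏_{p ∈ E} κ(p)`. -/
theorem stmt12 {R : Type*} [CommRing R] (E : Set (PrimeSpectrum R)) :
    @closure _ (patchTopology R) E =
      Set.range (PrimeSpectrum.comap (residueProdMap E)) := by
  classical
  letI := patchTopology R
  have hbasis : TopologicalSpace.IsTopologicalBasis
      ((fun F : Set (Set (PrimeSpectrum R)) => ⋂₀ F) '' { F : Set (Set (PrimeSpectrum R)) | F.Finite ∧
        F ⊆ {U : Set (PrimeSpectrum R) | ∃ f g : R,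
          U = (PrimeSpectrum.basicOpen f : Set (PrimeSpectrum R)) ∩
            PrimeSpectrum.zeroLocus {g}} }) :=
    TopologicalSpace.isTopologicalBasis_of_subbasis rfl
  apply subset_antisymm
  · -- closure ⊆ range
    intro x hx
    set 𝒜 : Set (Set E) := {A | ∃ f g : R, f ∉ x.asIdeal ∧ g ∈ x.asIdeal ∧
      A = {p : E | f ∉ (p : PrimeSpectrum R).asIdeal ∧
        g ∈ (p : PrimeSpectrum R).asIdeal}} with h𝒜
    have hgen : (Filter.generate 𝒜).NeBot := by
      rw [Filter.generate_neBot_iff]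
      intro T hT hTfin
      haveI := hTfin.fintype
      choose f g hf hg hA using fun t : T => hT t.2
      have hopen : IsOpen (⋂ t : T,
          ((PrimeSpectrum.basicOpen (f t) : Set (PrimeSpectrum R)) ∩
            PrimeSpectrum.zeroLocus {g t})) :=
        isOpen_iInter_of_finite fun t =>
          TopologicalSpace.GenerateOpen.basic _ ⟨f t, g t, rfl⟩
      have hxm : x ∈ ⋂ t : T,
          ((PrimeSpectrum.basicOpen (f t) : Set (PrimeSpectrum R)) ∩
            PrimeSpectrum.zeroLocus {g t}) := by
        refine Set.mem_iInter.2 fun t => ⟨by simpa using hf t, by simpa using hg t⟩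
      obtain ⟨q, hqO, hqE⟩ := mem_closure_iff.mp hx _ hopen hxm
      refine ⟨⟨q, hqE⟩, fun A hA' => ?_⟩
      have hAeq : A = {p : E | f ⟨A, hA'⟩ ∉ (p : PrimeSpectrum R).asIdeal ∧
          g ⟨A, hA'⟩ ∈ (p : PrimeSpectrum R).asIdeal} := hA ⟨A, hA'⟩
      rw [hAeq]
      have hq := Set.mem_iInter.1 hqO ⟨A, hA'⟩
      exact ⟨by simpa using hq.1, by simpa using hq.2⟩
    haveI := hgen
    set U : Ultrafilter E := Ultrafilter.of (Filter.generate 𝒜) with hU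
    have hmemU : ∀ A ∈ 𝒜, A ∈ U := fun A hA =>
      Ultrafilter.of_le (Filter.generate 𝒜) (Filter.mem_generate_of_mem hA)
    let Q : Ideal (∀ p : E, FractionRing (R ⧸ (p : PrimeSpectrum R).asIdeal)) :=
    { carrier := {s | {p : E | s p = 0} ∈ U}
      zero_mem' := by
        have : {p : E | (0 : ∀ p : E,
            FractionRing (R ⧸ (p : PrimeSpectrum R).asIdeal)) p = 0} = Set.univ := by
          ext p; simp
        show _ ∈ U
        rw [this]
        exact Filter.univ_mem
      add_mem' := by
        intro a b ha hb
        refine Filter.mem_of_superset (Filter.inter_mem ha hb) ?_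
        rintro p ⟨hpa, hpb⟩
        have hpa' : a p = 0 := hpa
        have hpb' : b p = 0 := hpb
        show (a + b) p = 0
        rw [Pi.add_apply, hpa', hpb', add_zero]
      smul_mem' := by
        intro c s hs
        refine Filter.mem_of_superset hs ?_
        intro p hp
        have hp' : s p = 0 := hp
        show (c • s) p = 0
        rw [smul_eq_mul, Pi.mul_apply, hp', mul_zero] }
    have hQprime : Q.IsPrime := by
      refine ⟨?_, ?_⟩
      · intro htop
        rw [Ideal.eq_top_iff_one] at htop
        have h1 : {p : E | (1 : ∀ p : E,
            FractionRing (R ⧸ (p : PrimeSpectrum R).asIdeal)) p = 0} ∈ U := htop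
        have hemp : {p : E | (1 : ∀ p : E,
            FractionRing (R ⧸ (p : PrimeSpectrum R).asIdeal)) p = 0} = (∅ : Set E) := by
          ext p; simp
        rw [hemp] at h1
        exact Filter.empty_notMem (U : Filter E) h1
      · intro a b hab
        have hab' : {p : E | (a * b) p = 0} ∈ U := hab
        have hsub : {p : E | (a * b) p = 0} ⊆ {p : E | a p = 0} ∪ {p : E | b p = 0} := by
          intro p hp
          have : a p * b p = 0 := hp
          exact mul_eq_zero.mp this
        have hun := Filter.mem_of_superset hab' hsub
        exact Ultrafilter.union_mem_iff.mp hun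
    refine ⟨⟨Q, hQprime⟩, ?_⟩
    apply PrimeSpectrum.ext
    rw [PrimeSpectrum.comap_asIdeal]
    ext r
    rw [Ideal.mem_comap]
    have hset : {p : E | residueProdMap E r p = 0} =
        {p : E | r ∈ (p : PrimeSpectrum R).asIdeal} := by
      ext p; exact residueProdMap_apply_eq_zero_iff E r p
    show ({p : E | residueProdMap E r p = 0} ∈ U) ↔ r ∈ x.asIdeal
    rw [hset]
    constructor
    · intro h
      by_contra hrx
      have hA : {p : E | r ∉ (p : PrimeSpectrum R).asIdeal ∧
          (0 : R) ∈ (p : PrimeSpectrum R).asIdeal} ∈ U :=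
        hmemU _ ⟨r, 0, hrx, x.asIdeal.zero_mem, rfl⟩
      have hcompl : {p : E | r ∈ (p : PrimeSpectrum R).asIdeal}ᶜ ∈ U :=
        Filter.mem_of_superset hA fun p hp => hp.1
      exact (Ultrafilter.compl_mem_iff_notMem.mp hcompl) h
    · intro h
      have h1 : (1 : R) ∉ x.asIdeal := (Ideal.ne_top_iff_one _).mp x.isPrime.ne_top
      exact Filter.mem_of_superset (hmemU _ ⟨1, r, h1, h, rfl⟩) fun p hp => hp.2
  · -- range ⊆ closure
    rintro y ⟨Q, rfl⟩
    rw [hbasis.mem_closure_iff]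
    rintro o ⟨F, ⟨hFfin, hFsub⟩, rfl⟩ hxo
    haveI := hFfin.fintype
    choose f g hfg using fun t : F => hFsub t.2
    by_contra hcon
    rw [Set.not_nonempty_iff_eq_empty] at hcon
    set x := PrimeSpectrum.comap (residueProdMap E) Q with hx
    have hmem : ∀ t : F, f t ∉ x.asIdeal ∧ g t ∈ x.asIdeal := by
      intro t
      have hxt : x ∈ (t : Set (PrimeSpectrum R)) := Set.mem_sInter.mp hxo t.1 t.2
      rw [hfg t] at hxt
      exact ⟨by simpa using hxt.1, by simpa using hxt.2⟩
    let c : R → (∀ p : E, FractionRing (R ⧸ (p : PrimeSpectrum R).asIdeal)) :=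
      fun a p => if a ∈ (p : PrimeSpectrum R).asIdeal then 1 else 0
    have hc : ∀ a ∈ x.asIdeal, c a ∉ Q.asIdeal := by
      intro a ha hmemQ
      let d : ∀ p : E, FractionRing (R ⧸ (p : PrimeSpectrum R).asIdeal) :=
        fun p => if a ∈ (p : PrimeSpectrum R).asIdeal then 0 else (residueProdMap E a p)⁻¹
      have h1 : (1 : ∀ p : E, FractionRing (R ⧸ (p : PrimeSpectrum R).asIdeal)) =
          c a + residueProdMap E a * d := by
        funext p
        by_cases hap : a ∈ (p : PrimeSpectrum R).asIdeal
        · have hz : residueProdMap E a p = 0 :=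
            (residueProdMap_apply_eq_zero_iff E a p).mpr hap
          show (1 : FractionRing _) = c a p + residueProdMap E a p * d p
          simp [c, d, hap, hz]
        · have hne : residueProdMap E a p ≠ 0 := fun hz =>
            hap ((residueProdMap_apply_eq_zero_iff E a p).mp hz)
          show (1 : FractionRing _) = c a p + residueProdMap E a p * d p
          simp [c, d, hap, mul_inv_cancel₀ hne]
      have haQ : residueProdMap E a ∈ Q.asIdeal := by
        rw [hx, PrimeSpectrum.comap_asIdeal, Ideal.mem_comap] at ha
        exact ha
      have hone : (1 : ∀ p : E, FractionRing (R ⧸ (p : PrimeSpectrum R).asIdeal)) ∈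
          Q.asIdeal := by
        rw [h1]
        exact Ideal.add_mem _ hmemQ (Ideal.mul_mem_right _ _ haQ)
      exact Q.isPrime.ne_top ((Ideal.eq_top_iff_one _).mpr hone)
    have hEmpty : ∀ p ∈ E, ∃ t : F, p ∉ (t : Set (PrimeSpectrum R)) := by
      intro p hp
      by_contra hall
      push_neg at hall
      have : p ∈ ⋂₀ F ∩ E := ⟨fun t ht => hall ⟨t, ht⟩, hp⟩
      rw [hcon] at this
      exact this
    have hs0 : residueProdMap E (∏ t : F, f t) * ∏ t : F, c (g t) = 0 := by
      funext p
      obtain ⟨t, hpt⟩ := hEmpty p.1 p.2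
      rw [hfg t] at hpt
      have hpt' : f t ∈ (p : PrimeSpectrum R).asIdeal ∨
          g t ∉ (p : PrimeSpectrum R).asIdeal := by
        by_contra hb
        push_neg at hb
        exact hpt ⟨by simpa using hb.1, by simpa using hb.2⟩
      show residueProdMap E (∏ t : F, f t) p * (∏ t : F, c (g t)) p = 0
      rcases hpt' with h | h
      · have hprod : (∏ t : F, f t) ∈ (p : PrimeSpectrum R).asIdeal := by
          obtain ⟨u, hu⟩ := Finset.dvd_prod_of_mem f (Finset.mem_univ t)
          rw [hu]
          exact Ideal.mul_mem_right _ _ h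
        rw [(residueProdMap_apply_eq_zero_iff E _ p).mpr hprod, zero_mul]
      · have hzero : (∏ t : F, c (g t)) p = 0 := by
          rw [Finset.prod_apply]
          exact Finset.prod_eq_zero (Finset.mem_univ t) (by simp [c, h])
        rw [hzero, mul_zero]
    have h0Q : residueProdMap E (∏ t : F, f t) * ∏ t : F, c (g t) ∈ Q.asIdeal := by
      rw [hs0]
      exact Ideal.zero_mem _
    rcases Q.isPrime.mem_or_mem h0Q with h | h
    · have hpx : (∏ t : F, f t) ∈ x.asIdeal := by
        rw [hx, PrimeSpectrum.comap_asIdeal, Ideal.mem_comap]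
        exact h
      obtain ⟨t, _, ht⟩ := Ideal.IsPrime.prod_mem_iff.mp hpx
      exact (hmem t).1 ht
    · obtain ⟨t, _, ht⟩ := Ideal.IsPrime.prod_mem_iff.mp h
      exact hc (g t) (hmem t).2 ht
end

section
/- Let R be a reduced commutative ring such that Min(R) is quasi-compact with respect to the subspace topology induced from the Zariski topology on Spec(R). Then the canonical ring map π: R → ∏_{p ∈ Min(R)} R_p into the product of the localizations of R at its minimal primes is injective and flat; moreover, for each minimal prime p of R the localization R_p is a field. -/
lemma aux_isField {R : Type*} [CommRing R] [IsReduced R] {p : Ideal R} [p.IsPrime]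
    (hp : p ∈ minimalPrimes R) : IsField (Localization.AtPrime p) := by
  rw [IsLocalRing.isField_iff_maximalIdeal_eq, eq_bot_iff]
  intro x hx
  have h := IsLocalization.AtPrime.radical_map_of_mem_minimalPrimes
    (A := Localization.AtPrime p) p ⊥ hp
  rw [Ideal.map_bot, IsLocalization.AtPrime.map_eq_maximalIdeal p (Localization.AtPrime p)] at h
  have : IsNilpotent x := mem_nilradical.mp (by show x ∈ (⊥ : Ideal _).radical; rw [h]; exact hx)
  simpa using this.eq_zero

lemma aux_ann {R : Type*} [CommRing R] [IsReduced R] {p : Ideal R} [p.IsPrime]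
    (hp : p ∈ minimalPrimes R) {r : R} (hr : r ∈ p) : ∃ s ∉ p, s * r = 0 := by
  have h0 : algebraMap R (Localization.AtPrime p) r = 0 := by
    have : algebraMap R (Localization.AtPrime p) r ∈ IsLocalRing.maximalIdeal _ :=
      (IsLocalization.AtPrime.to_map_mem_maximal_iff _ p r).mpr hr
    rwa [IsLocalRing.isField_iff_maximalIdeal_eq.mp (aux_isField hp), Ideal.mem_bot] at this
  obtain ⟨⟨s, hs⟩, h⟩ := (IsLocalization.map_eq_zero_iff p.primeCompl _ r).mp h0
  exact ⟨s, hs, h⟩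

/-- Let `R` be a reduced commutative ring whose minimal spectrum is quasi-compact in the
Zariski topology. Then the canonical map `π : R → ∏_{p ∈ Min(R)} R_p` is injective and flat,
and each localization `R_p` at a minimal prime `p` is a field. -/
theorem stmt13 {R : Type*} [CommRing R] [IsReduced R]
    (hcpt : IsCompact {p : PrimeSpectrum R | p.asIdeal ∈ minimalPrimes R}) :
    Function.Injective
        (Pi.ringHom fun p : {p : PrimeSpectrum R // p.asIdeal ∈ minimalPrimes R} =>
          algebraMap R (Localization.AtPrime p.1.asIdeal)) ∧
      RingHom.Flat
        (Pi.ringHom fun p : {p : PrimeSpectrum R // p.asIdeal ∈ minimalPrimes R} =>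
          algebraMap R (Localization.AtPrime p.1.asIdeal)) ∧
      ∀ p : PrimeSpectrum R, p.asIdeal ∈ minimalPrimes R →
        IsField (Localization.AtPrime p.asIdeal) := by
  refine ⟨?_, ?_, fun p hp => aux_isField hp⟩
  · -- injectivity
    rw [injective_iff_map_eq_zero]
    intro r hr
    have hmem : ∀ {q : Ideal R}, q.IsPrime → r ∈ q := by
      intro q hq
      haveI := hq
      obtain ⟨p, hpmin, hpq⟩ := Ideal.exists_minimalPrimes_le (I := (⊥ : Ideal R)) (J := q) bot_le
      haveI := hpmin.1.1
      have h0 : algebraMap R (Localization.AtPrime p) r = 0 := by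
        have := congrFun hr ⟨⟨p, hpmin.1.1⟩, hpmin⟩
        exact this
      obtain ⟨⟨s, hs⟩, h⟩ := (IsLocalization.map_eq_zero_iff p.primeCompl _ r).mp h0
      have hrp : r ∈ p := by
        rcases (hpmin.1.1.mul_mem_iff_mem_or_mem).mp (h ▸ p.zero_mem) with h' | h'
        · exact absurd h' hs
        · exact h'
      exact hpq hrp
    have : r ∈ nilradical R := by
      rw [nilradical_eq_sInf, Submodule.mem_sInf]
      intro q hq
      exact hmem hq
    exact IsReduced.eq_zero r (by simpa using this)
  · -- flatness
    classical
    letI : Algebra R (∀ p : {p : PrimeSpectrum R // p.asIdeal ∈ minimalPrimes R},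
        Localization.AtPrime p.1.asIdeal) :=
      (Pi.ringHom fun p : {p : PrimeSpectrum R // p.asIdeal ∈ minimalPrimes R} =>
        algebraMap R (Localization.AtPrime p.1.asIdeal)).toAlgebra
    letI : Module R (∀ p : {p : PrimeSpectrum R // p.asIdeal ∈ minimalPrimes R},
        Localization.AtPrime p.1.asIdeal) := Algebra.toModule
    show Module.Flat R _
    apply Module.Flat.of_forall_isTrivialRelation
    intro l
    let ι := Fin l
    intro f x hrel
    -- the relation, componentwise
    have hrelp : ∀ p : {p : PrimeSpectrum R // p.asIdeal ∈ minimalPrimes R},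
        ∑ i, algebraMap R (Localization.AtPrime p.1.asIdeal) (f i) * x i p = 0 := by
      intro p
      have h := congrFun hrel p
      rw [Finset.sum_apply] at h
      exact h
    -- compactness argument
    set Z : Set (PrimeSpectrum R) :=
      {p | p.asIdeal ∈ minimalPrimes R ∧ ∀ i, f i ∈ p.asIdeal} with hZdef
    have hZc : IsCompact Z := by
      have hZeq : Z = {p : PrimeSpectrum R | p.asIdeal ∈ minimalPrimes R} ∩
          PrimeSpectrum.zeroLocus (Set.range f) := by
        ext p
        simp [hZdef, PrimeSpectrum.mem_zeroLocus, Set.range_subset_iff]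
      rw [hZeq]
      exact hcpt.inter_right (PrimeSpectrum.isClosed_zeroLocus _)
    have hann : ∀ q : Z, ∃ s, s ∉ q.1.asIdeal ∧ ∀ i, s * f i = 0 := by
      rintro ⟨q, hqmin, hqf⟩
      have hc : ∀ i, ∃ s, s ∉ q.asIdeal ∧ s * f i = 0 := by
        intro i
        obtain ⟨s, hs, h⟩ := aux_ann hqmin (hqf i)
        exact ⟨s, hs, h⟩
      choose c hc1 hc2 using hc
      refine ⟨∏ i, c i, ?_, ?_⟩
      · intro hmem
        obtain ⟨i, -, hi⟩ := (Ideal.IsPrime.prod_mem_iff).mp hmem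
        exact hc1 i hi
      · intro i
        rw [← Finset.mul_prod_erase Finset.univ c (Finset.mem_univ i), mul_comm (c i),
          mul_assoc, hc2 i, mul_zero]
    choose b hb1 hb2 using hann
    have hcov : Z ⊆ ⋃ q : Z, (PrimeSpectrum.basicOpen (b q) : Set (PrimeSpectrum R)) := by
      intro p hp
      exact Set.mem_iUnion.mpr ⟨⟨p, hp⟩, (PrimeSpectrum.mem_basicOpen _ _).mpr (hb1 ⟨p, hp⟩)⟩
    obtain ⟨t, ht⟩ := hZc.elim_finite_subcover _
      (fun q : Z => (PrimeSpectrum.basicOpen (b q)).2) hcov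
    -- the syzygy matrix
    set a : ι → ((ι × ι) ⊕ (ι × {q : Z // q ∈ t})) → R := fun i =>
      Sum.elim
        (fun k : ι × ι => (if i = k.1 then f k.2 else 0) - (if i = k.2 then f k.1 else 0))
        (fun k : ι × {q : Z // q ∈ t} => if i = k.1 then b k.2.1 else 0) with hadef
    -- pointwise solution
    have key : ∀ p : {p : PrimeSpectrum R // p.asIdeal ∈ minimalPrimes R},
        ∃ yp : ((ι × ι) ⊕ (ι × {q : Z // q ∈ t})) → Localization.AtPrime p.1.asIdeal,
        ∀ i, x i p = ∑ k, algebraMap R (Localization.AtPrime p.1.asIdeal) (a i k) * yp k := by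
      intro p
      by_cases hall : ∀ i, f i ∈ p.1.asIdeal
      · -- all f i vanish at p : use the annihilators
        have hpZ : p.1 ∈ Z := ⟨p.2, hall⟩
        obtain ⟨q0, hq0t, hq0⟩ := Set.mem_iUnion₂.mp (ht hpZ)
        replace hq0 : b q0 ∉ p.1.asIdeal := by
          exact (PrimeSpectrum.mem_basicOpen _ _).mp hq0
        have hv : IsUnit (algebraMap R (Localization.AtPrime p.1.asIdeal) (b q0)) :=
          IsLocalization.map_units (Localization.AtPrime p.1.asIdeal)
            (⟨b q0, hq0⟩ : p.1.asIdeal.primeCompl)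
        refine ⟨Sum.elim (fun _ => 0)
          (fun k : ι × {q : Z // q ∈ t} => if k.2 = (⟨q0, hq0t⟩ : {q : Z // q ∈ t}) then
            ↑hv.unit⁻¹ * x k.1 p else 0), fun i => ?_⟩
        rw [Fintype.sum_sum_type]
        simp only [hadef, Sum.elim_inl, Sum.elim_inr, mul_zero, Finset.sum_const_zero, zero_add]
        rw [Fintype.sum_prod_type]
        have step1 : ∀ i' : ι, (∑ q : {q : Z // q ∈ t},
            algebraMap R (Localization.AtPrime p.1.asIdeal) (if i = i' then b q.1 else 0) *
              (if q = (⟨q0, hq0t⟩ : {q : Z // q ∈ t}) then ↑hv.unit⁻¹ * x i' p else 0)) =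
            algebraMap R (Localization.AtPrime p.1.asIdeal) (if i = i' then b q0 else 0) *
              (↑hv.unit⁻¹ * x i' p) := by
          intro i'
          simp only [mul_ite, mul_zero]
          rw [Finset.sum_ite_eq' Finset.univ (⟨q0, hq0t⟩ : {q : Z // q ∈ t})]
          simp
        rw [Finset.sum_congr rfl fun i' _ => step1 i']
        simp only [apply_ite (algebraMap R (Localization.AtPrime p.1.asIdeal)), map_zero,
          ite_mul, zero_mul]
        rw [Finset.sum_ite_eq Finset.univ i]
        simp [← mul_assoc, IsUnit.mul_val_inv]
      · -- some f i0 is invertible at p : use the Koszul syzygies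
        push_neg at hall
        obtain ⟨i0, hi0⟩ := hall
        have hu : IsUnit (algebraMap R (Localization.AtPrime p.1.asIdeal) (f i0)) :=
          IsLocalization.map_units (Localization.AtPrime p.1.asIdeal)
            (⟨f i0, hi0⟩ : p.1.asIdeal.primeCompl)
        refine ⟨Sum.elim
          (fun k : ι × ι => if k.2 = i0 then ↑hu.unit⁻¹ * x k.1 p else 0)
          (fun _ => 0), fun i => ?_⟩
        rw [Fintype.sum_sum_type]
        simp only [hadef, Sum.elim_inl, Sum.elim_inr, mul_zero, Finset.sum_const_zero, add_zero]
        rw [Fintype.sum_prod_type]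
        have step1 : ∀ i₁ : ι, (∑ j : ι,
            algebraMap R (Localization.AtPrime p.1.asIdeal)
              ((if i = i₁ then f j else 0) - (if i = j then f i₁ else 0)) *
              (if j = i0 then ↑hu.unit⁻¹ * x i₁ p else 0)) =
            algebraMap R (Localization.AtPrime p.1.asIdeal)
              ((if i = i₁ then f i0 else 0) - (if i = i0 then f i₁ else 0)) *
              (↑hu.unit⁻¹ * x i₁ p) := by
          intro i₁
          simp only [mul_ite, mul_zero]
          rw [Finset.sum_ite_eq' Finset.univ i0]
          simp
        rw [Finset.sum_congr rfl fun i₁ _ => step1 i₁]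
        simp only [map_sub, apply_ite (algebraMap R (Localization.AtPrime p.1.asIdeal)),
          map_zero, sub_mul, ite_mul, zero_mul]
        rw [Finset.sum_sub_distrib, Finset.sum_ite_eq Finset.univ i]
        have e3 : ∑ i₁ : ι, (if i = i0 then
            algebraMap R (Localization.AtPrime p.1.asIdeal) (f i₁) *
            (↑hu.unit⁻¹ * x i₁ p) else 0) = 0 := by
          by_cases hii : i = i0
          · simp only [if_pos hii]
            have hcomm : ∀ i₁ : ι, algebraMap R (Localization.AtPrime p.1.asIdeal) (f i₁) *
                (↑hu.unit⁻¹ * x i₁ p) = ↑hu.unit⁻¹ *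
                (algebraMap R (Localization.AtPrime p.1.asIdeal) (f i₁) * x i₁ p) := by
              intro i₁; ring
            rw [Finset.sum_congr rfl fun i₁ _ => hcomm i₁, ← Finset.mul_sum, hrelp p, mul_zero]
          · simp [hii]
        rw [e3, sub_zero]
        simp [← mul_assoc, IsUnit.mul_val_inv]
    -- assemble the trivial relation
    choose yp hyp using key
    letI : SMul R (∀ p : {p : PrimeSpectrum R // p.asIdeal ∈ minimalPrimes R},
        Localization.AtPrime p.1.asIdeal) := Algebra.toSMul
    suffices hgen : ∃ (a : ι → ((ι × ι) ⊕ (ι × {q : Z // q ∈ t})) → R)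
        (y : ((ι × ι) ⊕ (ι × {q : Z // q ∈ t})) →
          (∀ p : {p : PrimeSpectrum R // p.asIdeal ∈ minimalPrimes R},
            Localization.AtPrime p.1.asIdeal)),
        (∀ i, x i = ∑ j, a i j • y j) ∧ ∀ j, ∑ i, f i * a i j = 0 by
      obtain ⟨a', y', h1, h2⟩ := hgen
      let e := Fintype.equivFin ((ι × ι) ⊕ (ι × {q : Z // q ∈ t}))
      refine ⟨Fintype.card ((ι × ι) ⊕ (ι × {q : Z // q ∈ t})), fun i j => a' i (e.symm j),
        fun j => y' (e.symm j), fun i => ?_, fun j => h2 _⟩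
      rw [h1 i]
      exact (e.symm.sum_comp (fun j => a' i j • y' j)).symm
    refine ⟨a, fun k p => yp p k, ?_, ?_⟩
    · intro i
      funext p
      rw [Finset.sum_apply, hyp p i]
      exact Finset.sum_congr rfl fun k _ => rfl
    · rintro (⟨i₁, i₂⟩ | ⟨i', q⟩)
      · simp only [hadef, Sum.elim_inl, mul_sub, mul_ite, mul_zero, Finset.sum_sub_distrib,
          Finset.sum_ite_eq', Finset.mem_univ, if_pos]
        ring
      · simp only [hadef, Sum.elim_inr, mul_ite, mul_zero, Finset.sum_ite_eq',
          Finset.mem_univ, if_pos]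
        rw [mul_comm]
        exact hb2 q.1 i'
end

section
/- Let R be a reduced commutative ring such that Min(R) is quasi-compact with respect to the subspace topology induced from the Zariski topology on Spec(R). Then there exist an absolutely flat commutative ring B and a ring map ψ: R → B which is injective, flat, and an epimorphism of rings. -/
universe u

open scoped DirectSum TensorProduct

namespace Stmt14

variable {R : Type u} [CommRing R] [IsReduced R]

/-- The minimal spectrum, as a set of points of the prime spectrum. -/
def Mn (R : Type u) [CommRing R] : Set (PrimeSpectrum R) :=
  {p | p.asIdeal ∈ minimalPrimes R}

lemma zero_of_forall_mem (x : R) (h : ∀ q ∈ Mn R, x ∈ q.asIdeal) : x = 0 := by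
  have hx : x ∈ (0 : Ideal R).radical := by
    rw [← Ideal.sInf_minimalPrimes]
    rw [Ideal.mem_sInf]
    intro J hJ
    have hJp : J.IsPrime := hJ.1.1
    exact h ⟨J, hJp⟩ hJ
  have h2 : IsNilpotent x := by
    obtain ⟨n, hn⟩ : ∃ n, x ^ n = 0 := by
      simpa only [Ideal.mem_radical_iff, Ideal.zero_eq_bot, Submodule.mem_bot] using hx
    exact ⟨n, hn⟩
  exact h2.eq_zero

lemma ann_min (p : PrimeSpectrum R) (hp : p ∈ Mn R) {x : R} (hx : x ∈ p.asIdeal) :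
    ∃ c, c ∉ p.asIdeal ∧ c * x = 0 := by
  classical
  have hprime : p.asIdeal.IsPrime := p.isPrime
  set S := Localization.AtPrime p.asIdeal
  -- the image of x in the localization at p is nilpotent
  have hnil : IsNilpotent (algebraMap R S x) := by
    rw [← mem_nilradical, nilradical_eq_sInf, Ideal.mem_sInf]
    intro Q hQ
    haveI : Q.IsPrime := hQ
    have hq : Q.comap (algebraMap R S) ≤ p.asIdeal := by
      intro y hy
      by_contra hyp
      have : IsUnit (algebraMap R S y) :=
        IsLocalization.map_units S (⟨y, hyp⟩ : p.asIdeal.primeCompl)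
      exact hQ.ne_top (Q.eq_top_of_isUnit_mem hy this)
    have hple : p.asIdeal ≤ Q.comap (algebraMap R S) :=
      hp.2 ⟨Ideal.IsPrime.comap _, bot_le⟩ hq
    exact hple hx
  obtain ⟨n, hn⟩ := hnil
  have hxn : algebraMap R S (x ^ (n + 1)) = 0 := by
    rw [map_pow]
    rw [pow_succ]
    rw [hn, zero_mul]
  rw [IsLocalization.map_eq_zero_iff p.asIdeal.primeCompl] at hxn
  obtain ⟨c, hc⟩ := hxn
  refine ⟨(c : R), c.2, ?_⟩
  have : (c * x) ^ (n + 1) = 0 := by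
    have : (c : R) ^ (n + 1) * x ^ (n + 1) = ((c : R) ^ n) * ((c : R) * x ^ (n + 1)) := by
      ring
    rw [mul_pow, this, hc, mul_zero]
  exact ((IsNilpotent.mk _ _ this).eq_zero : (c : R) * x = 0)


/-! ### Families of elements covering the minimal spectrum -/

abbrev Fam (R : Type u) [CommRing R] := Σ n : ℕ, Fin n → R

variable (R) in
def IsCov (F : Fam R) : Prop := ∀ p ∈ Mn R, ∃ m, F.2 m ∉ p.asIdeal

variable (R) in
def piece (F : Fam R) (j : Fin F.1) (q : PrimeSpectrum R) : Prop :=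
  F.2 j ∉ q.asIdeal ∧ ∀ i, i < j → F.2 i ∈ q.asIdeal

variable (R) in
def GoodAt (F : Fam R) (x : Fin F.1 → R) (h : R) : Prop :=
  ∃ j : Fin F.1, (∃ c, h = F.2 j * c) ∧ (∀ q ∈ Mn R, h ∉ q.asIdeal → piece R F j q) ∧
    (x j * h = 0 ∨ ∃ c, h = F.2 j * (x j * c))

lemma piece_unique {F : Fam R} {j j' : Fin F.1} {q : PrimeSpectrum R}
    (h1 : piece R F j q) (h2 : piece R F j' q) : j = j' := by
  rcases lt_trichotomy j j' with h | h | h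
  · exact absurd (h2.2 j h) h1.1
  · exact h
  · exact absurd (h1.2 j' h) h2.1

lemma goodAt_mul_right {F : Fam R} {x : Fin F.1 → R} {h h' : R}
    (hg : GoodAt R F x h) : GoodAt R F x (h * h') := by
  obtain ⟨j, ⟨c, hc⟩, htr, hd⟩ := hg
  refine ⟨j, ⟨c * h', by rw [hc]; ring⟩, ?_, ?_⟩
  · intro q hq hmem
    refine htr q hq fun hh => hmem ?_
    exact Ideal.mul_mem_right _ _ hh
  · rcases hd with h0 | ⟨c, hc⟩
    · exact Or.inl (by rw [← mul_assoc, h0, zero_mul])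
    · exact Or.inr ⟨c * h', by rw [hc]; ring⟩

lemma goodAt_mul_left {F : Fam R} {x : Fin F.1 → R} {h h' : R}
    (hg : GoodAt R F x h') : GoodAt R F x (h * h') := by
  rw [mul_comm]; exact goodAt_mul_right hg

lemma point (F : Fam R) (hF : IsCov R F) (x : Fin F.1 → R)
    (p : PrimeSpectrum R) (hp : p ∈ Mn R) :
    ∃ h, h ∉ p.asIdeal ∧ GoodAt R F x h := by
  classical
  have hne : p.asIdeal ≠ ⊤ := p.isPrime.ne_top
  have hone : (1 : R) ∉ p.asIdeal := fun h1 => hne (Ideal.eq_top_iff_one _ |>.2 h1)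
  obtain ⟨j₀, hj₀⟩ := hF p hp
  set T : Finset (Fin F.1) := Finset.univ.filter (fun j => F.2 j ∉ p.asIdeal) with hT
  have hTne : T.Nonempty := ⟨j₀, by simp [hT, hj₀]⟩
  set j := T.min' hTne with hjdef
  have hj : F.2 j ∉ p.asIdeal := by
    have := T.min'_mem hTne
    simpa [hT] using this
  have hlt : ∀ i, i < j → F.2 i ∈ p.asIdeal := by
    intro i hi
    by_contra hmem
    have : i ∈ T := by simp [hT, hmem]
    exact absurd (T.min'_le i this) (not_le.2 hi)
  -- choice of annihilators for earlier indices
  have hcc : ∀ i : Fin F.1, ∃ ci, ci ∉ p.asIdeal ∧ (F.2 i ∈ p.asIdeal → ci * F.2 i = 0) := by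
    intro i
    by_cases hi : F.2 i ∈ p.asIdeal
    · obtain ⟨c, hc1, hc2⟩ := ann_min p hp hi
      exact ⟨c, hc1, fun _ => hc2⟩
    · exact ⟨1, hone, fun h => absurd h hi⟩
  choose c hc1 hc2 using hcc
  set Cprod := ∏ i ∈ Finset.univ.filter (· < j), c i with hCp
  have hCprod : Cprod ∉ p.asIdeal := by
    have : Cprod ∈ p.asIdeal.primeCompl :=
      Submonoid.prod_mem _ (fun i _ => hc1 i)
    exact this
  have hCdvd : ∀ i, i < j → c i ∣ Cprod := by
    intro i hi
    exact Finset.dvd_prod_of_mem c (by simp [hi])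
  have key : ∀ d : R, d ∉ p.asIdeal →
      (F.2 j * (d * Cprod)) ∉ p.asIdeal ∧
      (∀ q ∈ Mn R, (F.2 j * (d * Cprod)) ∉ q.asIdeal → piece R F j q) := by
    intro d hd
    constructor
    · intro hmem
      rcases p.isPrime.mem_or_mem hmem with h1 | h1
      · exact hj h1
      rcases p.isPrime.mem_or_mem h1 with h2 | h2
      · exact hd h2
      · exact hCprod h2
    · intro q hq hmem
      constructor
      · intro hFj
        exact hmem (Ideal.mul_mem_right _ _ hFj)
      · intro i hi
        have hci : c i ∉ q.asIdeal := by
          intro hciq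
          refine hmem ?_
          obtain ⟨e, he⟩ := hCdvd i hi
          have : F.2 j * (d * Cprod) = c i * (e * (F.2 j * d)) := by rw [he]; ring
          rw [this]
          exact Ideal.mul_mem_right _ _ hciq
        have h0 : c i * F.2 i = 0 := hc2 i (hlt i hi)
        have : c i * F.2 i ∈ q.asIdeal := by rw [h0]; exact Ideal.zero_mem _
        rcases q.isPrime.mem_or_mem this with h1 | h1
        · exact absurd h1 hci
        · exact h1
  by_cases hxj : x j ∈ p.asIdeal
  · obtain ⟨d, hd1, hd2⟩ := ann_min p hp hxj
    obtain ⟨hplem, htr⟩ := key d hd1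
    refine ⟨F.2 j * (d * Cprod), hplem, j, ⟨d * Cprod, rfl⟩, htr, Or.inl ?_⟩
    have : x j * (F.2 j * (d * Cprod)) = (d * x j) * (F.2 j * Cprod) := by ring
    rw [this, hd2, zero_mul]
  · obtain ⟨hplem, htr⟩ := key (x j) hxj
    exact ⟨F.2 j * (x j * Cprod), hplem, j, ⟨x j * Cprod, rfl⟩, htr,
      Or.inr ⟨Cprod, rfl⟩⟩

lemma selection (hcpt : IsCompact (Mn R)) (P : R → Prop)
    (hpt : ∀ p ∈ Mn R, ∃ h, h ∉ p.asIdeal ∧ P h) :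
    ∃ H : Fam R, IsCov R H ∧ ∀ m, P (H.2 m) := by
  classical
  have hcover : Mn R ⊆ ⋃ h : {h : R // P h},
      (PrimeSpectrum.basicOpen h.1 : Set (PrimeSpectrum R)) := by
    intro p hp
    obtain ⟨h, hh1, hh2⟩ := hpt p hp
    exact Set.mem_iUnion.2 ⟨⟨h, hh2⟩, by simpa [PrimeSpectrum.mem_basicOpen] using hh1⟩
  obtain ⟨t, ht⟩ := hcpt.elim_finite_subcover
    (fun h : {h : R // P h} => (PrimeSpectrum.basicOpen h.1 : Set (PrimeSpectrum R)))
    (fun h => (PrimeSpectrum.basicOpen h.1).2) hcover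
  refine ⟨⟨t.card, fun m => ((t.equivFin.symm m) : {h : R // P h}).1⟩, ?_, ?_⟩
  · intro p hp
    have h1 := ht hp
    rw [Set.mem_iUnion₂] at h1
    obtain ⟨h, hht, hmem⟩ := h1
    refine ⟨t.equivFin ⟨h, hht⟩, ?_⟩
    show ((t.equivFin.symm (t.equivFin ⟨h, hht⟩)) : {h : R // P h}).1 ∉ p.asIdeal
    rw [Equiv.symm_apply_apply]
    simpa [PrimeSpectrum.mem_basicOpen] using hmem
  · intro m
    exact (((t.equivFin.symm m) : {h : R // P h})).2

lemma master (hcpt : IsCompact (Mn R)) (F : Fam R) (hF : IsCov R F) (x : Fin F.1 → R)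
    (F' : Fam R) (hF' : IsCov R F') (x' : Fin F'.1 → R) :
    ∃ H : Fam R, IsCov R H ∧ ∀ m, GoodAt R F x (H.2 m) ∧ GoodAt R F' x' (H.2 m) := by
  refine selection hcpt (fun h => GoodAt R F x h ∧ GoodAt R F' x' h) ?_
  intro p hp
  obtain ⟨h1, hh1, hg1⟩ := point F hF x p hp
  obtain ⟨h2, hh2, hg2⟩ := point F' hF' x' p hp
  refine ⟨h1 * h2, ?_, goodAt_mul_right hg1, goodAt_mul_left hg2⟩
  intro hmem
  rcases p.isPrime.mem_or_mem hmem with h | h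
  · exact hh1 h
  · exact hh2 h


/-! ### The directed system of finite products of localizations -/

variable (R) in
def Refines (F H : Fam R) : Prop :=
  ∀ m : Fin H.1, ∃ j : Fin F.1, (∃ c, H.2 m = F.2 j * c) ∧
    ∀ q ∈ Mn R, H.2 m ∉ q.asIdeal → piece R F j q

lemma refines_of_goodAt {F H : Fam R} {x : Fin F.1 → R}
    (h : ∀ m, GoodAt R F x (H.2 m)) : Refines R F H := by
  intro m
  obtain ⟨j, hj1, hj2, _⟩ := h m
  exact ⟨j, hj1, hj2⟩

lemma refines_trans {F G H : Fam R} (h1 : Refines R F G) (h2 : Refines R G H) :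
    Refines R F H := by
  intro m
  obtain ⟨j2, ⟨c2, hc2⟩, ht2⟩ := h2 m
  obtain ⟨j1, ⟨c1, hc1⟩, ht1⟩ := h1 j2
  refine ⟨j1, ⟨c1 * c2, by rw [hc2, hc1]; ring⟩, ?_⟩
  intro q hq hmem
  have hp2 := ht2 q hq hmem
  exact ht1 q hq hp2.1

variable (R) in
def Cov : Type u := {F : Fam R // IsCov R F}

variable (R) in
def Idx : Type u := Cov R × ℕ

instance : Preorder (Idx R) where
  le i j := i = j ∨ (Refines R i.1.1 j.1.1 ∧ i.2 < j.2)
  le_refl i := Or.inl rfl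
  le_trans i j k h1 h2 := by
    rcases h1 with rfl | h1
    · exact h2
    rcases h2 with rfl | h2
    · exact Or.inr h1
    · exact Or.inr ⟨refines_trans h1.1 h2.1, h1.2.trans h2.2⟩

lemma Idx.le_def {i j : Idx R} : i ≤ j ↔ i = j ∨ (Refines R i.1.1 j.1.1 ∧ i.2 < j.2) :=
  Iff.rfl

variable (R) in
abbrev St (i : Idx R) : Type u := Π m : Fin i.1.1.1, Localization.Away (i.1.1.2 m)

lemma away_subsingleton (h : R) (hzero : ∀ q ∈ Mn R, h ∈ q.asIdeal) :
    Subsingleton (Localization.Away h) := by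
  have h0 : h = 0 := zero_of_forall_mem _ hzero
  subst h0
  have hu : IsUnit (algebraMap R (Localization.Away (0 : R)) 0) :=
    IsLocalization.Away.algebraMap_isUnit 0
  rw [map_zero] at hu
  exact subsingleton_of_zero_eq_one (isUnit_zero_iff.mp hu)

/-- The canonical map between away-localizations induced by divisibility. -/
noncomputable def compHom (F : Fam R) (h : R) (j : Fin F.1) (hc : ∃ c, h = F.2 j * c) :
    Localization.Away (F.2 j) →+* Localization.Away h :=
  Localization.awayLift (algebraMap R _) _
    (IsLocalization.Away.isUnit_of_dvd (x := h) ⟨hc.choose, hc.choose_spec⟩)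

lemma compHom_algebraMap (F : Fam R) (h : R) (j : Fin F.1) (hc : ∃ c, h = F.2 j * c) :
    (compHom F h j hc).comp (algebraMap R _) = algebraMap R (Localization.Away h) :=
  IsLocalization.Away.lift_comp _
    (IsLocalization.Away.isUnit_of_dvd (x := h) ⟨hc.choose, hc.choose_spec⟩)

noncomputable def transHom {F H : Fam R} (r : Refines R F H) :
    (Π j : Fin F.1, Localization.Away (F.2 j)) →+*
      (Π m : Fin H.1, Localization.Away (H.2 m)) :=
  Pi.ringHom fun m => (compHom F (H.2 m) (r m).choose (r m).choose_spec.1).comp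
    (Pi.evalRingHom _ (r m).choose)

lemma transHom_apply {F H : Fam R} (r : Refines R F H) (y) (m) :
    transHom r y m =
      compHom F (H.2 m) (r m).choose (r m).choose_spec.1 (y (r m).choose) := rfl

lemma transHom_algebraMap {F H : Fam R} (r : Refines R F H) :
    (transHom r).comp (algebraMap R _) = algebraMap R _ := by
  apply RingHom.ext
  intro a
  funext m
  rw [RingHom.comp_apply, transHom_apply]
  have h1 : (algebraMap R (Π j : Fin F.1, Localization.Away (F.2 j)) a) ((r m).choose) =
      algebraMap R (Localization.Away (F.2 ((r m).choose))) a := rfl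
  rw [h1, ← RingHom.comp_apply, compHom_algebraMap]
  rfl

lemma hom_unique {F : Fam R} {h : R} {j j' : Fin F.1}
    (u : Localization.Away (F.2 j) →+* Localization.Away h)
    (v : Localization.Away (F.2 j') →+* Localization.Away h)
    (hu : u.comp (algebraMap R _) = algebraMap R _)
    (hv : v.comp (algebraMap R _) = algebraMap R _)
    (tj : ∀ q ∈ Mn R, h ∉ q.asIdeal → piece R F j q)
    (tj' : ∀ q ∈ Mn R, h ∉ q.asIdeal → piece R F j' q) :
    u.comp (Pi.evalRingHom (fun j : Fin F.1 => Localization.Away (F.2 j)) j) =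
      v.comp (Pi.evalRingHom _ j') := by
  by_cases hzero : ∀ q ∈ Mn R, h ∈ q.asIdeal
  · haveI := away_subsingleton h hzero
    ext x
    exact Subsingleton.elim _ _
  · push_neg at hzero
    obtain ⟨q, hq, hmem⟩ := hzero
    have hjj' : j = j' := piece_unique (tj q hq hmem) (tj' q hq hmem)
    subst hjj'
    have huv : u = v := IsLocalization.ringHom_ext (Submonoid.powers (F.2 j))
      (hu.trans hv.symm)
    rw [huv]

open Classical in
noncomputable def tmap : ∀ i j : Idx R, i ≤ j → St R i →+* St R j := fun i j hle =>
  if e : i = j then e ▸ RingHom.id (St R i)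
  else transHom ((hle.resolve_left e).1)

lemma tmap_self (i : Idx R) (h : i ≤ i) : tmap i i h = RingHom.id _ := by
  simp [tmap]

lemma tmap_of_ne {i j : Idx R} (hle : i ≤ j) (hne : i ≠ j) :
    tmap i j hle = transHom ((hle.resolve_left hne).1) := by
  simp [tmap, hne]

lemma tmap_map_map {i j k : Idx R} (hij : i ≤ j) (hjk : j ≤ k) (x : St R i) :
    tmap j k hjk (tmap i j hij x) = tmap i k (hij.trans hjk) x := by
  by_cases e1 : i = j
  · subst e1
    rw [tmap_self]
    rfl
  by_cases e2 : j = k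
  · subst e2
    rw [tmap_self]
    rfl
  have h1 := (hij.resolve_left e1)
  have h2 := (hjk.resolve_left e2)
  have e3 : i ≠ k := by
    intro h
    subst h
    exact absurd (h1.2.trans h2.2) (lt_irrefl _)
  rw [tmap_of_ne hij e1, tmap_of_ne hjk e2, tmap_of_ne (hij.trans hjk) e3]
  set r1 := h1.1
  set r2 := h2.1
  set r3 := ((hij.trans hjk).resolve_left e3).1
  funext m
  rw [transHom_apply, transHom_apply, transHom_apply]
  -- apply uniqueness
  have key := hom_unique
    ((compHom j.1.1 (k.1.1.2 m) (r2 m).choose (r2 m).choose_spec.1).comp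
      (compHom i.1.1 (j.1.1.2 (r2 m).choose) (r1 (r2 m).choose).choose
        (r1 (r2 m).choose).choose_spec.1))
    (compHom i.1.1 (k.1.1.2 m) (r3 m).choose (r3 m).choose_spec.1)
    (by rw [RingHom.comp_assoc, compHom_algebraMap, compHom_algebraMap])
    (compHom_algebraMap _ _ _ _)
    (by
      intro q hq hmem
      have hp2 := (r2 m).choose_spec.2 q hq hmem
      exact (r1 (r2 m).choose).choose_spec.2 q hq hp2.1)
    ((r3 m).choose_spec.2)
  exact RingHom.congr_fun key x

instance : DirectedSystem (St (R := R)) (fun i j h => tmap i j h) where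
  map_self i x := by rw [tmap_self]; rfl
  map_map {i j k} hij hjk x := tmap_map_map hij hjk x


/-! ### The direct limit -/

lemma one_notMem (p : PrimeSpectrum R) : (1 : R) ∉ p.asIdeal :=
  fun h1 => p.isPrime.ne_top (Ideal.eq_top_iff_one _ |>.2 h1)

variable (R) in
noncomputable def idx0 : Idx R :=
  (⟨⟨1, fun _ => (1 : R)⟩, fun p _ => ⟨0, one_notMem p⟩⟩, 0)

lemma refines_one (H : Fam R) : Refines R (⟨1, fun _ => (1 : R)⟩ : Fam R) H := by
  intro m
  refine ⟨0, ⟨H.2 m, (one_mul _).symm⟩, ?_⟩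
  intro q hq _
  refine ⟨one_notMem q, ?_⟩
  intro i hi
  have h0 : (i : ℕ) < (0 : Fin 1) := hi
  simp at h0

lemma directed_idx (hcpt : IsCompact (Mn R)) :
    IsDirected (Idx R) (· ≤ ·) := by
  constructor
  intro i j
  obtain ⟨H, hHcov, hH⟩ := master hcpt i.1.1 i.1.2 (fun _ => 0) j.1.1 j.1.2 (fun _ => 0)
  refine ⟨(⟨H, hHcov⟩, max i.2 j.2 + 1), ?_, ?_⟩
  · exact Or.inr ⟨refines_of_goodAt (fun m => (hH m).1), by omega⟩
  · exact Or.inr ⟨refines_of_goodAt (fun m => (hH m).2), by omega⟩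

variable (R) in
noncomputable def B : Type u := Ring.DirectLimit (St (R := R)) (fun i j h => tmap i j h)

noncomputable instance : CommRing (B R) :=
  inferInstanceAs (CommRing (Ring.DirectLimit (St (R := R)) (fun i j h => tmap i j h)))

variable (R) in
noncomputable def stg (i : Idx R) : St R i →+* B R :=
  Ring.DirectLimit.of (St (R := R)) (fun i j h => tmap i j h) i

lemma stg_tmap {i j : Idx R} (h : i ≤ j) (x : St R i) :
    stg R j (tmap i j h x) = stg R i x :=
  Ring.DirectLimit.of_f h x

variable (R) in
noncomputable def psi : R →+* B R :=
  (stg R (idx0 R)).comp (algebraMap R (St R (idx0 R)))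

lemma tmap_algebraMap {i k : Idx R} (h : i ≤ k) :
    (tmap i k h).comp (algebraMap R (St R i)) = algebraMap R (St R k) := by
  by_cases e : i = k
  · subst e
    rw [tmap_self, RingHom.id_comp]
  · rw [tmap_of_ne h e]
    exact transHom_algebraMap _

lemma stg_comp (hcpt : IsCompact (Mn R)) (i : Idx R) :
    (stg R i).comp (algebraMap R (St R i)) = psi R := by
  haveI := directed_idx hcpt
  have key : ∀ i k : Idx R, i ≤ k →
      (stg R i).comp (algebraMap R (St R i)) = (stg R k).comp (algebraMap R (St R k)) := by
    intro i k h
    rw [← tmap_algebraMap h, ← RingHom.comp_assoc]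
    ext a
    exact (stg_tmap h _).symm
  obtain ⟨k, hik, h0k⟩ := directed_of (· ≤ ·) i (idx0 R)
  rw [key i k hik, psi, key (idx0 R) k h0k]

lemma psi_injective (hcpt : IsCompact (Mn R)) : Function.Injective (psi R) := by
  haveI := directed_idx hcpt
  rw [injective_iff_map_eq_zero]
  intro x hx
  have hx0 : stg R (idx0 R) (algebraMap R (St R (idx0 R)) x) = 0 := hx
  obtain ⟨k, hk, hzero⟩ := Ring.DirectLimit.of.zero_exact hx0
  have : algebraMap R (St R k) x = 0 := by
    rw [← RingHom.congr_fun (tmap_algebraMap hk) x]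
    exact hzero
  -- componentwise, x is killed by a power of each covering element
  apply zero_of_forall_mem
  intro q hq
  obtain ⟨m, hm⟩ := k.1.2 q hq
  have hcomp : algebraMap R (Localization.Away (k.1.1.2 m)) x = 0 := by
    have := congrFun this m
    exact this
  rw [IsLocalization.map_eq_zero_iff (Submonoid.powers (k.1.1.2 m))] at hcomp
  obtain ⟨⟨c, n, rfl⟩, hc⟩ := hcomp
  -- (k.1.1.2 m)^n * x = 0, and k.1.1.2 m ∉ q
  have hpow : (k.1.1.2 m) ^ n * x ∈ q.asIdeal := by rw [hc]; exact Ideal.zero_mem _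
  rcases q.isPrime.mem_or_mem hpow with h1 | h1
  · exact absurd (q.isPrime.mem_of_pow_mem _ h1) hm
  · exact h1


/-! ### Absolute flatness (von Neumann regularity) of the limit -/

lemma away_zero_or_unit {g h x s : R} (hdvd : g ∣ h) (hs : s ∈ Submonoid.powers g)
    (u : Localization.Away g →+* Localization.Away h)
    (hu : u.comp (algebraMap R (Localization.Away g)) = algebraMap R (Localization.Away h))
    (w : Localization.Away g)
    (hw : w * algebraMap R (Localization.Away g) s = algebraMap R (Localization.Away g) x)
    (hdisj : x * h = 0 ∨ ∃ c, h = g * (x * c)) :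
    ∃ z, u w = u w * u w * z := by
  have hunit_g : IsUnit (algebraMap R (Localization.Away h) g) :=
    IsLocalization.Away.isUnit_of_dvd (x := h) hdvd
  have hunit_h : IsUnit (algebraMap R (Localization.Away h) h) :=
    IsLocalization.Away.algebraMap_isUnit _
  have hrel : u w * algebraMap R (Localization.Away h) s =
      algebraMap R (Localization.Away h) x := by
    have happ := congrArg u hw
    rw [map_mul] at happ
    have e1 : u ((algebraMap R (Localization.Away g)) s) =
        algebraMap R (Localization.Away h) s := by
      rw [← RingHom.comp_apply, hu]
    have e2 : u ((algebraMap R (Localization.Away g)) x) =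
        algebraMap R (Localization.Away h) x := by
      rw [← RingHom.comp_apply, hu]
    rw [e1, e2] at happ
    exact happ
  have hunit_s : IsUnit (algebraMap R (Localization.Away h) s) := by
    obtain ⟨e, he⟩ := hs
    rw [← he, map_pow]
    exact hunit_g.pow e
  rcases hdisj with h0 | ⟨c, hc⟩
  · have hx0 : algebraMap R (Localization.Away h) x = 0 := by
      have hzz : algebraMap R (Localization.Away h) (x * h) = 0 := by
        rw [h0, map_zero]
      rw [map_mul] at hzz
      exact (hunit_h.mul_left_eq_zero).mp hzz
    have hy0 : u w = 0 := (hunit_s.mul_left_eq_zero).mp (hrel.trans hx0)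
    exact ⟨0, by rw [hy0]; ring⟩
  · have hxunit : IsUnit (algebraMap R (Localization.Away h) x) :=
      IsLocalization.Away.isUnit_of_dvd (x := h) ⟨g * c, by rw [hc]; ring⟩
    have hyunit : IsUnit (u w) := by
      have huws : IsUnit (u w * algebraMap R (Localization.Away h) s) := by
        rw [hrel]; exact hxunit
      exact isUnit_of_mul_isUnit_left huws
    obtain ⟨v, hv⟩ := hyunit
    exact ⟨(v⁻¹ : Units _), by rw [← hv, Units.mul_inv_cancel_right]⟩

lemma vnr (hcpt : IsCompact (Mn R)) (b : B R) : ∃ c : B R, b = b ^ 2 * c := by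
  classical
  haveI := directed_idx hcpt
  haveI : Nonempty (Idx R) := ⟨idx0 R⟩
  obtain ⟨i, y, rfl⟩ := Ring.DirectLimit.exists_of b
  -- choose representations of the components of y
  have hrep : ∀ j : Fin i.1.1.1, ∃ (x : R) (s : Submonoid.powers (i.1.1.2 j)),
      y j * algebraMap R (Localization.Away (i.1.1.2 j)) s = algebraMap R _ x := by
    intro j
    obtain ⟨⟨x, s⟩, hx⟩ := IsLocalization.surj (Submonoid.powers (i.1.1.2 j)) (y j)
    exact ⟨x, s, hx⟩
  choose xs ss hss using hrep
  obtain ⟨H, hHcov, hH⟩ := master hcpt i.1.1 i.1.2 xs i.1.1 i.1.2 xs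
  have hik : i ≤ ((⟨H, hHcov⟩ : Cov R), i.2 + 1) :=
    Or.inr ⟨refines_of_goodAt (fun m => (hH m).1), Nat.lt_succ_self _⟩
  set k : Idx R := ((⟨H, hHcov⟩ : Cov R), i.2 + 1) with hk
  have hne : i ≠ k := by
    intro e
    have h2 := congrArg Prod.snd e
    rw [hk] at h2
    exact absurd h2 (Nat.ne_of_lt (Nat.lt_succ_self _))
  set y' := tmap i k hik y with hy'
  set r := (hik.resolve_left hne).1 with hr
  have hy'm : ∀ m, y' m =
      compHom i.1.1 (H.2 m) (r m).choose (r m).choose_spec.1 (y (r m).choose) := by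
    intro m
    rw [hy', tmap_of_ne (j := k) hik hne]
    rfl
  have hcomp : ∀ m, ∃ z, y' m = y' m * y' m * z := by
    intro m
    by_cases hallq : ∀ q ∈ Mn R, H.2 m ∈ q.asIdeal
    · haveI := away_subsingleton (H.2 m) hallq
      exact ⟨0, Subsingleton.elim _ _⟩
    push_neg at hallq
    obtain ⟨q, hq, hqmem⟩ := hallq
    obtain ⟨j, hmul, htrace, hdisj⟩ := (hH m).1
    have hjc : j = (r m).choose :=
      piece_unique (htrace q hq hqmem) ((r m).choose_spec.2 q hq hqmem)
    rw [hjc] at hmul hdisj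
    obtain ⟨z, hz⟩ := away_zero_or_unit
      (g := i.1.1.2 (r m).choose) (h := H.2 m)
      (x := xs (r m).choose) (s := ((ss (r m).choose : R)))
      (by obtain ⟨c, hc⟩ := hmul; exact ⟨c, hc⟩)
      (ss (r m).choose).2
      (compHom i.1.1 (H.2 m) (r m).choose (r m).choose_spec.1)
      (compHom_algebraMap _ _ _ _)
      (y (r m).choose) (hss (r m).choose) hdisj
    rw [← hy'm m] at hz
    exact ⟨z, hz⟩
  choose z hz using hcomp
  refine ⟨stg R k z, ?_⟩
  have h1 : stg R i y = stg R k y' := (stg_tmap hik y).symm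
  have h2 : y' = y' * y' * z := by
    funext m
    exact hz m
  show (stg R i) y = (stg R i) y ^ 2 * stg R k z
  rw [h1, pow_two, ← map_mul, ← map_mul, ← h2]


/-! ### Flatness -/

instance stFlat (i : Idx R) : Module.Flat R (St R i) :=
  Module.Flat.of_linearEquiv
    (DirectSum.linearEquivFunOnFintype R (Fin i.1.1.1) (fun m => Localization.Away (i.1.1.2 m))).symm

lemma psi_flat (hcpt : IsCompact (Mn R)) : RingHom.Flat (psi R) := by
  classical
  haveI := directed_idx hcpt
  haveI : Nonempty (Idx R) := ⟨idx0 R⟩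
  letI : Algebra R (B R) := (psi R).toAlgebra
  have hsmul : ∀ (i : Idx R) (a : R) (v : St R i), stg R i (a • v) = a • (stg R i v) := by
    intro i a v
    rw [Algebra.smul_def, Algebra.smul_def, RingHom.algebraMap_toAlgebra, map_mul]
    congr 1
    exact RingHom.congr_fun (stg_comp hcpt i) a
  let stgL : ∀ i : Idx R, St R i →ₗ[R] B R := fun i =>
    { toFun := stg R i
      map_add' := fun u v => map_add _ u v
      map_smul' := fun a v => hsmul i a v }
  have htmap_smul : ∀ (i k : Idx R) (h : i ≤ k) (a : R) (v : St R i),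
      tmap i k h (a • v) = a • tmap i k h v := by
    intro i k h a v
    rw [Algebra.smul_def, Algebra.smul_def, map_mul]
    congr 1
    exact RingHom.congr_fun (tmap_algebraMap h) a
  let tmapL : ∀ (i k : Idx R) (h : i ≤ k), St R i →ₗ[R] St R k := fun i k h =>
    { toFun := tmap i k h
      map_add' := fun u v => map_add _ u v
      map_smul' := fun a v => htmap_smul i k h a v }
  have hstgL_comp : ∀ (i k : Idx R) (h : i ≤ k), (stgL k).comp (tmapL i k h) = stgL i := by
    intro i k h
    apply LinearMap.ext
    intro v
    exact stg_tmap h v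
  refine (@Module.Flat.iff_lift_lsmul_comp_subtype_injective R (B R) _ _ Algebra.toModule).mpr ?_
  intro I hIfg
  -- the multiplication maps
  have hnat : ∀ (M N : Type u) (_ : AddCommGroup M) (_ : AddCommGroup N)
      (_ : Module R M) (_ : Module R N) (L : M →ₗ[R] N) (η : I ⊗[R] M),
      TensorProduct.lift ((LinearMap.lsmul R N).comp I.subtype)
          (LinearMap.lTensor (↥I) L η) =
        L (TensorProduct.lift ((LinearMap.lsmul R M).comp I.subtype) η) := by
    intro M N _ _ _ _ L η
    induction η using TensorProduct.induction_on with
    | zero => simp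
    | tmul a v => simp
    | add u v hu hv => simp [map_add, hu, hv]
  rw [injective_iff_map_eq_zero]
  intro ξ hξ
  have hst : ∃ (i : Idx R) (η : I ⊗[R] St R i), (LinearMap.lTensor (↥I) (stgL i)) η = ξ := by
    clear hξ
    induction ξ using TensorProduct.induction_on with
    | zero => exact ⟨idx0 R, 0, map_zero _⟩
    | tmul a b =>
      obtain ⟨i, y, hy⟩ := Ring.DirectLimit.exists_of b
      refine ⟨i, a ⊗ₜ y, ?_⟩
      rw [LinearMap.lTensor_tmul]
      exact congrArg (fun t => a ⊗ₜ[R] t) hy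
    | add u v hu hv =>
      obtain ⟨i1, η1, h1⟩ := hu
      obtain ⟨i2, η2, h2⟩ := hv
      obtain ⟨k, hk1, hk2⟩ := directed_of (· ≤ ·) i1 i2
      refine ⟨k, (LinearMap.lTensor (↥I) (tmapL i1 k hk1)) η1 +
        (LinearMap.lTensor (↥I) (tmapL i2 k hk2)) η2, ?_⟩
      rw [map_add]
      rw [← LinearMap.comp_apply, ← LinearMap.lTensor_comp, hstgL_comp]
      rw [← LinearMap.comp_apply (LinearMap.lTensor _ _), ← LinearMap.lTensor_comp, hstgL_comp]
      rw [h1, h2]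
  obtain ⟨i, η, rfl⟩ := hst
  rw [hnat] at hξ
  have hξ' : stg R i (TensorProduct.lift ((LinearMap.lsmul R (St R i)).comp I.subtype) η) = 0 := hξ
  obtain ⟨k, hik, hzero⟩ := Ring.DirectLimit.of.zero_exact hξ'
  have hmu : TensorProduct.lift ((LinearMap.lsmul R (St R k)).comp I.subtype)
      ((LinearMap.lTensor (↥I) (tmapL i k hik)) η) = 0 := by
    rw [hnat]
    exact hzero
  have hflat : Function.Injective
      (TensorProduct.lift ((LinearMap.lsmul R (St R k)).comp I.subtype)) :=
    Module.Flat.iff_lift_lsmul_comp_subtype_injective.mp inferInstance hIfg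
  have hη0 : (LinearMap.lTensor (↥I) (tmapL i k hik)) η = 0 :=
    (injective_iff_map_eq_zero _).mp hflat _ hmu
  rw [← hstgL_comp i k hik, LinearMap.lTensor_comp, LinearMap.comp_apply, hη0, map_zero]


/-! ### Epimorphism -/

noncomputable def sg (H : Fam R) (m : Fin H.1) (w : Localization.Away (H.2 m)) :
    Π mm : Fin H.1, Localization.Away (H.2 mm) := by
  classical
  exact Pi.single m w

lemma sg_alg_smul (H : Fam R) (m : Fin H.1) (c : R) (w : Localization.Away (H.2 m)) :
    sg H m (algebraMap R (Localization.Away (H.2 m)) c * w) = c • sg H m w := by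
  classical
  funext m''
  simp only [sg]
  by_cases e : m'' = m
  · subst e
    rw [Pi.single_eq_same, Pi.smul_apply, Pi.single_eq_same, Algebra.smul_def]
  · rw [Pi.single_eq_of_ne e, Pi.smul_apply, Pi.single_eq_of_ne e, smul_zero]

lemma sg_zero (H : Fam R) (m : Fin H.1) : sg H m 0 = 0 := by
  classical
  simp [sg]

lemma sg_sum (H : Fam R) (w : Π mm : Fin H.1, Localization.Away (H.2 mm)) :
    w = ∑ m, sg H m (w m) := by
  classical
  simp only [sg]
  exact (Finset.univ_sum_single w).symm

lemma compHom_rel {F : Fam R} {hh : R} {j : Fin F.1} (hc : ∃ c, hh = F.2 j * c)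
    (w : Localization.Away (F.2 j)) (x s : R)
    (hw : w * algebraMap R (Localization.Away (F.2 j)) s =
      algebraMap R (Localization.Away (F.2 j)) x) :
    compHom F hh j hc w * algebraMap R (Localization.Away hh) s =
      algebraMap R (Localization.Away hh) x := by
  have e1 : ∀ a : R, compHom F hh j hc (algebraMap R (Localization.Away (F.2 j)) a) =
      algebraMap R (Localization.Away hh) a :=
    fun a => RingHom.congr_fun (compHom_algebraMap F hh j hc) a
  have happ := congrArg (compHom F hh j hc) hw
  rw [map_mul, e1 s, e1 x] at happ
  exact happ

lemma unit_of_power_dvd {g hh s : R} (hdvd : g ∣ hh) (hs : s ∈ Submonoid.powers g) :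
    ∃ v : Localization.Away hh, algebraMap R (Localization.Away hh) s * v = 1 := by
  have hu : IsUnit (algebraMap R (Localization.Away hh) s) := by
    obtain ⟨e, he⟩ := hs
    rw [← he, map_pow]
    exact (IsLocalization.Away.isUnit_of_dvd (x := hh) hdvd).pow e
  obtain ⟨u, hu'⟩ := hu
  exact ⟨(u⁻¹ : (Localization.Away hh)ˣ), by rw [← hu']; exact u.mul_inv⟩

lemma inv_self_away (hh : R) :
    ∃ v : Localization.Away hh, algebraMap R (Localization.Away hh) hh * v = 1 := by
  obtain ⟨u, hu'⟩ := IsLocalization.Away.algebraMap_isUnit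
    (S := Localization.Away hh) hh
  exact ⟨(u⁻¹ : (Localization.Away hh)ˣ), by rw [← hu']; exact u.mul_inv⟩

lemma pair_swap {F H : Fam R} (r : Refines R F H)
    (y : Π j : Fin F.1, Localization.Away (F.2 j)) (m m' : Fin H.1) :
    sg H m (transHom r y m) ⊗ₜ[R] sg H m' 1 =
      sg H m 1 ⊗ₜ[R] sg H m' (transHom r y m') := by
  classical
  by_cases e : (r m).choose = (r m').choose
  · -- same piece: use a common representation
    obtain ⟨⟨x, s⟩, hxs⟩ :=
      IsLocalization.surj (Submonoid.powers (F.2 (r m).choose)) (y ((r m).choose))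
    have rel_m : transHom r y m * algebraMap R (Localization.Away (H.2 m)) (s : R) =
        algebraMap R (Localization.Away (H.2 m)) x := by
      rw [transHom_apply]
      exact compHom_rel _ _ _ _ hxs
    have hxs' : y ((r m').choose) *
        algebraMap R (Localization.Away (F.2 ((r m').choose))) (s : R) =
        algebraMap R (Localization.Away (F.2 ((r m').choose))) x := e ▸ hxs
    have rel_m' : transHom r y m' * algebraMap R (Localization.Away (H.2 m')) (s : R) =
        algebraMap R (Localization.Away (H.2 m')) x := by
      rw [transHom_apply]
      exact compHom_rel _ _ _ _ hxs'
    have hs_mem : (s : R) ∈ Submonoid.powers (F.2 ((r m').choose)) := e ▸ s.2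
    have hdvd' : F.2 ((r m').choose) ∣ H.2 m' := by
      obtain ⟨c, hc⟩ := (r m').choose_spec.1
      exact ⟨c, hc⟩
    obtain ⟨v, hv⟩ := unit_of_power_dvd hdvd' hs_mem
    calc sg H m (transHom r y m) ⊗ₜ[R] sg H m' 1
        = sg H m (transHom r y m) ⊗ₜ[R]
            sg H m' (algebraMap R (Localization.Away (H.2 m')) (s : R) * v) := by rw [hv]
      _ = sg H m (transHom r y m) ⊗ₜ[R] ((s : R) • sg H m' v) := by rw [sg_alg_smul]
      _ = ((s : R) • sg H m (transHom r y m)) ⊗ₜ[R] sg H m' v :=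
          (TensorProduct.smul_tmul _ _ _).symm
      _ = sg H m (algebraMap R (Localization.Away (H.2 m)) (s : R) * transHom r y m) ⊗ₜ[R]
            sg H m' v := by rw [sg_alg_smul]
      _ = sg H m (algebraMap R (Localization.Away (H.2 m)) x * 1) ⊗ₜ[R] sg H m' v := by
            rw [mul_comm (algebraMap R (Localization.Away (H.2 m)) (s : R)) _, rel_m, mul_one]
      _ = (x • sg H m 1) ⊗ₜ[R] sg H m' v := by rw [sg_alg_smul]
      _ = sg H m 1 ⊗ₜ[R] (x • sg H m' v) := TensorProduct.smul_tmul _ _ _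
      _ = sg H m 1 ⊗ₜ[R] sg H m' (algebraMap R (Localization.Away (H.2 m')) x * v) := by
            rw [sg_alg_smul]
      _ = sg H m 1 ⊗ₜ[R] sg H m' (transHom r y m') := by
            rw [← rel_m', mul_assoc, hv, mul_one]
  · -- different pieces: both sides vanish
    have hzero : H.2 m * H.2 m' = 0 := by
      apply zero_of_forall_mem
      intro q hq
      by_contra hmem
      have h1 : H.2 m ∉ q.asIdeal := fun hx => hmem (Ideal.mul_mem_right _ _ hx)
      have h2 : H.2 m' ∉ q.asIdeal := fun hx => hmem (Ideal.mul_mem_left _ _ hx)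
      exact e (piece_unique ((r m).choose_spec.2 q hq h1) ((r m').choose_spec.2 q hq h2))
    have hum : IsUnit (algebraMap R (Localization.Away (H.2 m)) (H.2 m)) :=
      IsLocalization.Away.algebraMap_isUnit (S := Localization.Away (H.2 m)) (H.2 m)
    have hum' : IsUnit (algebraMap R (Localization.Away (H.2 m')) (H.2 m')) :=
      IsLocalization.Away.algebraMap_isUnit (S := Localization.Away (H.2 m')) (H.2 m')
    have hzm : algebraMap R (Localization.Away (H.2 m)) (H.2 m') = 0 := by
      have hmul0 : algebraMap R (Localization.Away (H.2 m)) (H.2 m) *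
          algebraMap R (Localization.Away (H.2 m)) (H.2 m') = 0 := by
        rw [← map_mul, hzero, map_zero]
      exact (hum.mul_right_eq_zero).mp hmul0
    have hzm' : algebraMap R (Localization.Away (H.2 m')) (H.2 m) = 0 := by
      have hmul0 : algebraMap R (Localization.Away (H.2 m')) (H.2 m) *
          algebraMap R (Localization.Away (H.2 m')) (H.2 m') = 0 := by
        rw [← map_mul, hzero, map_zero]
      exact (hum'.mul_left_eq_zero).mp hmul0
    obtain ⟨v1, hv1⟩ := inv_self_away (H.2 m')
    obtain ⟨v2, hv2⟩ := inv_self_away (H.2 m)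
    have lhs0 : sg H m (transHom r y m) ⊗ₜ[R] sg H m' 1 = 0 := by
      calc sg H m (transHom r y m) ⊗ₜ[R] sg H m' 1
          = sg H m (transHom r y m) ⊗ₜ[R]
              sg H m' (algebraMap R (Localization.Away (H.2 m')) (H.2 m') * v1) := by rw [hv1]
        _ = sg H m (transHom r y m) ⊗ₜ[R] ((H.2 m') • sg H m' v1) := by rw [sg_alg_smul]
        _ = ((H.2 m') • sg H m (transHom r y m)) ⊗ₜ[R] sg H m' v1 :=
            (TensorProduct.smul_tmul _ _ _).symm
        _ = sg H m (algebraMap R (Localization.Away (H.2 m)) (H.2 m') * transHom r y m) ⊗ₜ[R]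
              sg H m' v1 := by rw [sg_alg_smul]
        _ = 0 := by rw [hzm, zero_mul, sg_zero, TensorProduct.zero_tmul]
    have rhs0 : sg H m 1 ⊗ₜ[R] sg H m' (transHom r y m') = 0 := by
      calc sg H m 1 ⊗ₜ[R] sg H m' (transHom r y m')
          = sg H m (algebraMap R (Localization.Away (H.2 m)) (H.2 m) * v2) ⊗ₜ[R]
              sg H m' (transHom r y m') := by rw [hv2]
        _ = ((H.2 m) • sg H m v2) ⊗ₜ[R] sg H m' (transHom r y m') := by rw [sg_alg_smul]
        _ = sg H m v2 ⊗ₜ[R] ((H.2 m) • sg H m' (transHom r y m')) :=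
            TensorProduct.smul_tmul _ _ _
        _ = sg H m v2 ⊗ₜ[R]
              sg H m' (algebraMap R (Localization.Away (H.2 m')) (H.2 m) *
                transHom r y m') := by rw [sg_alg_smul]
        _ = 0 := by rw [hzm', zero_mul, sg_zero, TensorProduct.tmul_zero]
    rw [lhs0, rhs0]

lemma tensor_comm_stage {F H : Fam R} (r : Refines R F H)
    (y : Π j : Fin F.1, Localization.Away (F.2 j)) :
    (transHom r y) ⊗ₜ[R] (1 : Π m : Fin H.1, Localization.Away (H.2 m)) =
      (1 : Π m : Fin H.1, Localization.Away (H.2 m)) ⊗ₜ[R] (transHom r y) := by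
  classical
  conv_lhs => rw [sg_sum H (transHom r y), sg_sum H 1]
  conv_rhs => rw [sg_sum H (transHom r y), sg_sum H 1]
  rw [TensorProduct.sum_tmul, TensorProduct.sum_tmul]
  refine Finset.sum_congr rfl ?_
  intro m _
  rw [TensorProduct.tmul_sum, TensorProduct.tmul_sum]
  refine Finset.sum_congr rfl ?_
  intro m' _
  have hone : (1 : Π mm : Fin H.1, Localization.Away (H.2 mm)) m' = 1 := rfl
  have hone2 : (1 : Π mm : Fin H.1, Localization.Away (H.2 mm)) m = 1 := rfl
  rw [hone, hone2]
  exact pair_swap r y m m'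

lemma psi_epi (hcpt : IsCompact (Mn R)) (C : Type u) [CommRing C] (g h : B R →+* C)
    (hgh : g.comp (psi R) = h.comp (psi R)) : g = h := by
  classical
  haveI := directed_idx hcpt
  haveI : Nonempty (Idx R) := ⟨idx0 R⟩
  letI : Algebra R (B R) := (psi R).toAlgebra
  letI : Algebra R C := (g.comp (psi R)).toAlgebra
  let g' : B R →ₐ[R] C := { g with commutes' := fun a => rfl }
  let h' : B R →ₐ[R] C := { h with
    commutes' := fun a => (RingHom.congr_fun hgh a).symm }
  let Φ : (B R) ⊗[R] (B R) →ₐ[R] C :=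
    Algebra.TensorProduct.lift g' h' (fun x y => Commute.all _ _)
  apply RingHom.ext
  intro b
  obtain ⟨i, y, hb⟩ := Ring.DirectLimit.exists_of b
  obtain ⟨H, hHcov, hH⟩ := master hcpt i.1.1 i.1.2 (fun _ => 0) i.1.1 i.1.2 (fun _ => 0)
  have hik : i ≤ ((⟨H, hHcov⟩ : Cov R), i.2 + 1) :=
    Or.inr ⟨refines_of_goodAt (fun m => (hH m).1), Nat.lt_succ_self _⟩
  set k : Idx R := ((⟨H, hHcov⟩ : Cov R), i.2 + 1) with hk
  have hne : i ≠ k := by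
    intro e
    have h2 := congrArg Prod.snd e
    rw [hk] at h2
    exact absurd h2 (Nat.ne_of_lt (Nat.lt_succ_self _))
  set r := (hik.resolve_left hne).1 with hr
  have htm : tmap i k hik = (transHom r : St R i →+* St R k) := by
    rw [tmap_of_ne (j := k) hik hne]
  have hb' : stg R k (transHom r y) = b := by
    show stg R k (transHom r y) = b
    rw [← hb]
    show stg R k (transHom r y) = stg R i y
    rw [← htm]
    exact stg_tmap hik y
  -- the stage map as an algebra hom
  let κ : St R k →ₐ[R] B R := { stg R k with
    commutes' := fun a => RingHom.congr_fun (stg_comp hcpt k) a }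
  have hmapped := congrArg (Φ.comp (Algebra.TensorProduct.map κ κ)) (tensor_comm_stage r y)
  rw [AlgHom.comp_apply, AlgHom.comp_apply] at hmapped
  rw [Algebra.TensorProduct.map_tmul, Algebra.TensorProduct.map_tmul] at hmapped
  rw [map_one κ, Algebra.TensorProduct.lift_tmul, Algebra.TensorProduct.lift_tmul] at hmapped
  rw [map_one h', map_one g', mul_one, one_mul] at hmapped
  have hgb : g' (κ (transHom r y)) = g b := by
    show g (stg R k (transHom r y)) = g b
    rw [hb']
  have hhb : h' (κ (transHom r y)) = h b := by
    show h (stg R k (transHom r y)) = h b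
    rw [hb']
  rw [hgb, hhb] at hmapped
  exact hmapped

end Stmt14

/-- Let `R` be a reduced commutative ring whose minimal spectrum is quasi-compact in the
Zariski topology. Then there exist an absolutely flat commutative ring `B` and a ring map
`ψ : R → B` which is injective, flat, and an epimorphism of rings. -/
theorem stmt14 {R : Type u} [CommRing R] [IsReduced R]
    (hcpt : IsCompact {p : PrimeSpectrum R | p.asIdeal ∈ minimalPrimes R}) :
    ∃ (B : Type u) (_ : CommRing B) (ψ : R →+* B),
      (∀ b : B, ∃ c : B, b = b ^ 2 * c) ∧
      Function.Injective ψ ∧ ψ.Flat ∧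
      (∀ (C : Type u) [CommRing C] (g h : B →+* C), g.comp ψ = h.comp ψ → g = h) := by
  have hcpt' : IsCompact (Stmt14.Mn R) := hcpt
  exact ⟨Stmt14.B R, inferInstance, Stmt14.psi R,
    Stmt14.vnr hcpt', Stmt14.psi_injective hcpt', Stmt14.psi_flat hcpt',
    fun C _ g h => Stmt14.psi_epi hcpt' C g h⟩
end

section
/- Let R be a reduced commutative ring. Then a prime ideal q of the polynomial ring R[x] is a minimal prime of R[x] if and only if q = p[x] (the extension of p to R[x], i.e., the ideal of polynomials all of whose coefficients lie in p) for some minimal prime p of R. -/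
open Polynomial

lemma comap_map_C_aux {R : Type*} [CommRing R] (P : Ideal R) :
    (P.map (C : R →+* R[X])).comap (C : R →+* R[X]) = P := by
  ext x
  simp only [Ideal.mem_comap, Ideal.mem_map_C_iff]
  constructor
  · intro h; simpa using h 0
  · intro h n
    cases n with
    | zero => simpa using h
    | succ n => simp [Polynomial.coeff_C]

/-- Let `R` be a reduced commutative ring. A prime ideal `q` of `R[x]` is a minimal prime
of `R[x]` if and only if `q = p[x]` (the extension of `p` along `R → R[x]`, i.e. the ideal
of polynomials all of whose coefficients lie in `p`) for some minimal prime `p` of `R`. -/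
theorem stmt15 {R : Type*} [CommRing R] [IsReduced R]
    (q : Ideal (Polynomial R)) (hq : q.IsPrime) :
    q ∈ minimalPrimes (Polynomial R) ↔
      ∃ p ∈ minimalPrimes R, q = Ideal.map (Polynomial.C : R →+* Polynomial R) p := by
  rw [minimalPrimes_eq_minimals]
  constructor
  · intro hmin
    have hp₀ : (q.comap (C : R →+* R[X])).IsPrime := Ideal.comap_isPrime _ _
    obtain ⟨p, hp, hple⟩ :=
      Ideal.exists_minimalPrimes_le (I := (⊥ : Ideal R)) (J := q.comap C) bot_le
    refine ⟨p, hp, ?_⟩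
    have h1 : Ideal.map (C : R →+* R[X]) p ≤ q :=
      le_trans (Ideal.map_mono hple) (Ideal.map_comap_le)
    exact le_antisymm (hmin.2 (haveI := hp.1.1; Ideal.isPrime_map_C_of_isPrime) h1) h1
  · rintro ⟨p, hp, rfl⟩
    refine ⟨haveI := hp.1.1; Ideal.isPrime_map_C_of_isPrime, ?_⟩
    intro q' hq' hle
    have h2 : q'.comap (C : R →+* R[X]) ≤ p := by
      simpa [comap_map_C_aux] using Ideal.comap_mono (f := (C : R →+* R[X])) hle
    have h3 : p ≤ q'.comap (C : R →+* R[X]) :=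
      hp.2 ⟨Ideal.comap_isPrime _ _, bot_le⟩ h2
    exact le_trans (Ideal.map_mono h3) Ideal.map_comap_le
end

section
/- Let φ: R → A be an injective flat ring map between commutative rings. Then the induced map φ*: Spec(A) → Spec(R), q ↦ φ⁻¹(q), maps Min(A) onto Min(R); consequently, if Min(A) is quasi-compact in the Zariski topology of Spec(A), then Min(R) is quasi-compact in the Zariski topology of Spec(R). -/
open TensorProduct

/-- Key flatness fact: if `z * φ a = 0` with `φ` flat, then `z` lies in the extension of
the annihilator of `a`. -/
lemma flat_mem_map_ann {R A : Type*} [CommRing R] [CommRing A] (φ : R →+* A)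
    (hflat : φ.Flat) (a : R) (z : A) (hz : z * φ a = 0) :
    z ∈ Ideal.map φ (LinearMap.ker (LinearMap.lsmul R R a)) := by
  algebraize [φ]
  set K := LinearMap.ker (LinearMap.lsmul R R a)
  let e : A ⊗[R] R ≃ₗ[R] A := TensorProduct.rid R A
  have hker := Module.Flat.ker_lTensor_eq (R := R) (S := R) (M := A)
    (LinearMap.lsmul R R a)
  have h1 : (AlgebraTensorModule.lTensor R A (LinearMap.lsmul R R a)) (z ⊗ₜ[R] 1) = 0 := by
    have : (AlgebraTensorModule.lTensor R A (LinearMap.lsmul R R a)) (z ⊗ₜ[R] 1)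
        = z ⊗ₜ[R] a := by
      simp [AlgebraTensorModule.lTensor]
    rw [this]
    apply e.injective
    have : e (z ⊗ₜ[R] a) = a • z := by simp [e]
    rw [this, map_zero]
    rw [Algebra.smul_def]
    rw [show (algebraMap R A) a = φ a from rfl, mul_comm]
    exact hz
  have h2 : z ⊗ₜ[R] (1 : R) ∈
      LinearMap.range (AlgebraTensorModule.lTensor R A K.subtype) := by
    rw [← hker]; exact h1
  obtain ⟨t, ht⟩ := h2
  have : z = e ((AlgebraTensorModule.lTensor R A K.subtype) t) := by
    rw [ht]; simp [e]
  rw [this]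
  clear ht this h1
  induction t using TensorProduct.induction_on with
  | zero => simp
  | tmul w k =>
    have : e ((AlgebraTensorModule.lTensor R A K.subtype) (w ⊗ₜ[R] k)) = (k : R) • w := by
      simp [e, AlgebraTensorModule.lTensor]
    rw [this, Algebra.smul_def]
    exact Ideal.mul_mem_right _ _ (Ideal.mem_map_of_mem φ k.2)
  | add s t hs ht =>
    rw [map_add, map_add]
    exact Ideal.add_mem _ hs ht

/-- If `φ` is flat and `q` is a minimal prime of `A`, then `φ⁻¹ q` is a minimal prime of `R`. -/
lemma comap_minimal_of_flat {R A : Type*} [CommRing R] [CommRing A] (φ : R →+* A)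
    (hflat : φ.Flat) {q : Ideal A} [hq : q.IsPrime] (hqmin : q ∈ minimalPrimes A) :
    q.comap φ ∈ minimalPrimes R := by
  haveI : (q.comap φ).IsPrime := Ideal.comap_isPrime φ q
  refine ⟨⟨inferInstance, bot_le⟩, ?_⟩
  rintro J ⟨hJp, -⟩ hJle
  intro x hx
  -- `φ x ∈ q`, hence nilpotent in the localization at `q`
  have hφx : φ x ∈ q := hx
  have hnil : IsNilpotent (algebraMap A (Localization q.primeCompl) (φ x)) := by
    haveI := Ring.KrullDimLE.of_isLocalization q hqmin (Localization q.primeCompl)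
    rw [Ring.KrullDimLE.isNilpotent_iff_mem_maximalIdeal]
    rwa [IsLocalization.AtPrime.to_map_mem_maximal_iff _ q]
  obtain ⟨n, hn⟩ := hnil
  rw [← map_pow, ← map_zero (algebraMap A (Localization q.primeCompl)),
    IsLocalization.eq_iff_exists q.primeCompl] at hn
  obtain ⟨t, ht⟩ := hn
  simp only [mul_zero] at ht
  -- `t * φ (x^n) = 0` with `t ∉ q`
  have ht0 : (t : A) * φ (x ^ n) = 0 := by rw [map_pow]; exact ht
  have hmem := flat_mem_map_ann φ hflat (x ^ n) t ht0
  -- some annihilating element `s` of `x^n` has `φ s ∉ q`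
  have : ¬ Ideal.map φ (LinearMap.ker (LinearMap.lsmul R R (x ^ n))) ≤ q := by
    intro hle
    exact t.2 (hle hmem)
  have hex : ∃ s ∈ LinearMap.ker (LinearMap.lsmul R R (x ^ n)), φ s ∉ q := by
    by_contra hcon
    push_neg at hcon
    apply this
    rw [Ideal.map_le_iff_le_comap]
    intro s hs
    exact hcon s hs
  obtain ⟨s, hs, hsq⟩ := hex
  have hsx : s * x ^ n = 0 := by
    simpa [LinearMap.mem_ker, smul_eq_mul, mul_comm] using hs
  have hsJ : s ∉ J := fun h => hsq (hJle h)
  have : x ^ n ∈ J := by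
    have h0 : s * x ^ n ∈ J := by rw [hsx]; exact J.zero_mem
    rcases hJp.mem_or_mem h0 with h | h
    · exact absurd h hsJ
    · exact h
  exact hJp.mem_of_pow_mem n this

/-- Let `φ : R → A` be an injective flat ring map. Then the induced map
`φ* : Spec A → Spec R` maps `Min(A)` onto `Min(R)`; consequently, if `Min(A)` is
quasi-compact in the Zariski topology, then so is `Min(R)`. -/
theorem stmt17 {R A : Type*} [CommRing R] [CommRing A] (φ : R →+* A)
    (hinj : Function.Injective φ) (hflat : φ.Flat) :
    PrimeSpectrum.comap φ '' {q : PrimeSpectrum A | q.asIdeal ∈ minimalPrimes A} =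
        {p : PrimeSpectrum R | p.asIdeal ∈ minimalPrimes R} ∧
      (IsCompact {q : PrimeSpectrum A | q.asIdeal ∈ minimalPrimes A} →
        IsCompact {p : PrimeSpectrum R | p.asIdeal ∈ minimalPrimes R}) := by
  have himg : PrimeSpectrum.comap φ '' {q : PrimeSpectrum A | q.asIdeal ∈ minimalPrimes A} =
      {p : PrimeSpectrum R | p.asIdeal ∈ minimalPrimes R} := by
    apply Set.Subset.antisymm
    · rintro p ⟨q, hq, rfl⟩
      haveI := q.isPrime
      exact comap_minimal_of_flat φ hflat hq
    · rintro p hp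
      obtain ⟨p', hp'prime, hp'c⟩ :=
        Ideal.exists_comap_eq_of_mem_minimalPrimes_of_injective hinj p.asIdeal hp
      obtain ⟨q₀, hq₀min, hq₀le⟩ :=
        Ideal.exists_minimalPrimes_le (J := p') (I := (⊥ : Ideal A)) bot_le
      haveI hq₀prime : q₀.IsPrime := hq₀min.1.1
      have hcle : q₀.comap φ ≤ p.asIdeal := by
        rw [← hp'c]
        exact Ideal.comap_mono hq₀le
      have hcmin : q₀.comap φ ∈ minimalPrimes R := comap_minimal_of_flat φ hflat hq₀min
      have : p.asIdeal ≤ q₀.comap φ := hp.2 ⟨hcmin.1.1, bot_le⟩ hcle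
      have heq : q₀.comap φ = p.asIdeal := le_antisymm hcle this
      exact ⟨⟨q₀, hq₀prime⟩, hq₀min, PrimeSpectrum.ext heq⟩
  refine ⟨himg, fun hc => ?_⟩
  rw [← himg]
  exact hc.image (PrimeSpectrum.continuous_comap φ)
end

section
/- Let R be a commutative ring. Then Spec(R) is a Noetherian topological space with respect to the Zariski topology if and only if the collection of open subsets of Spec(R) in the flat topology is stable under arbitrary intersections (i.e., every intersection of a family of flat-open subsets of Spec(R) is flat-open). -/
namespace Stmt19Aux

open PrimeSpectrum TopologicalSpace

variable {R : Type*} [CommRing R]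

/-- The sub-basis of the flat topology. -/
def subB (R : Type*) [CommRing R] : Set (Set (PrimeSpectrum R)) :=
  {U : Set (PrimeSpectrum R) | ∃ f : R, U = PrimeSpectrum.zeroLocus {f}}

lemma isOpen_flat_iff {U : Set (PrimeSpectrum R)} :
    @IsOpen _ (flatTopology R) U ↔ TopologicalSpace.GenerateOpen (subB R) U :=
  Iff.rfl

/-- Flat-open sets are stable under specialization. -/
lemma stable {U : Set (PrimeSpectrum R)} (hU : GenerateOpen (subB R) U) :
    ∀ p q : PrimeSpectrum R, p.asIdeal ≤ q.asIdeal → p ∈ U → q ∈ U := by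
  induction hU with
  | basic V hV =>
    obtain ⟨f, rfl⟩ := hV
    intro p q hpq hp
    rw [mem_zeroLocus] at hp ⊢
    exact fun x hx => hpq (hp hx)
  | univ => intro p q _ _; trivial
  | inter V W _ _ ihV ihW =>
    intro p q hpq hp
    exact ⟨ihV p q hpq hp.1, ihW p q hpq hp.2⟩
  | sUnion s _ ih =>
    rintro p q hpq ⟨V, hVs, hpV⟩
    exact ⟨V, hVs, ih V hVs p q hpq hpV⟩

/-- The zero locus of a finite set is flat-open. -/
lemma gen_zeroLocus_finset (t : Finset R) :
    GenerateOpen (subB R) (zeroLocus (t : Set R)) := by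
  classical
  refine Finset.induction_on t ?_ ?_
  · rw [Finset.coe_empty, zeroLocus_empty]
    exact .univ
  · intro a s _ ih
    rw [Finset.coe_insert, Set.insert_eq, zeroLocus_union]
    exact .inter _ _ (.basic _ ⟨a, rfl⟩) ih

/-- Every point of a flat-open set lies in a finite zero locus contained in it. -/
lemma exists_finset {U : Set (PrimeSpectrum R)} (hU : GenerateOpen (subB R) U) :
    ∀ x ∈ U, ∃ t : Finset R, x ∈ zeroLocus (t : Set R) ∧ zeroLocus (t : Set R) ⊆ U := by
  classical
  induction hU with
  | basic V hV =>
    obtain ⟨f, rfl⟩ := hV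
    intro x hx
    exact ⟨{f}, by simpa using hx, by simp⟩
  | univ =>
    intro x _
    exact ⟨∅, by simp [zeroLocus_empty], by simp⟩
  | inter V W _ _ ihV ihW =>
    intro x hx
    obtain ⟨t₁, h₁, h₁'⟩ := ihV x hx.1
    obtain ⟨t₂, h₂, h₂'⟩ := ihW x hx.2
    refine ⟨t₁ ∪ t₂, ?_, ?_⟩
    · rw [Finset.coe_union, zeroLocus_union]
      exact ⟨h₁, h₂⟩
    · rw [Finset.coe_union, zeroLocus_union]
      exact fun y hy => ⟨h₁' hy.1, h₂' hy.2⟩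
  | sUnion s _ ih =>
    rintro x ⟨V, hVs, hxV⟩
    obtain ⟨t, ht, ht'⟩ := ih V hVs x hxV
    exact ⟨t, ht, ht'.trans (Set.subset_sUnion_of_mem hVs)⟩

/-- Ohm–Pendleton: if every prime is the radical of a finitely generated ideal, then so is
every radical ideal. -/
lemma op (hprime : ∀ p : Ideal R, p.IsPrime →
      ∃ t : Finset R, p = (Ideal.span (t : Set R)).radical)
    {I : Ideal R} (hI : I.IsRadical) :
    ∃ t : Finset R, I = (Ideal.span (t : Set R)).radical := by
  classical
  by_contra hcon
  set S : Set (Ideal R) :=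
    {J | J.IsRadical ∧ ¬∃ t : Finset R, J = (Ideal.span (t : Set R)).radical} with hSdef
  have hub : ∀ c ⊆ S, IsChain (· ≤ ·) c → ∀ y ∈ c, ∃ ub ∈ S, ∀ z ∈ c, z ≤ ub := by
    -- every nonempty chain in S has an upper bound in S
    intro c hcS hchain y hyc
    have hdir := hchain.directedOn
    refine ⟨sSup c, ⟨?_, ?_⟩, fun z hz => le_sSup hz⟩
    · -- the sup of a chain of radical ideals is radical
      intro x hx
      obtain ⟨n, hn⟩ := hx
      obtain ⟨K, hKc, hK⟩ := (Submodule.mem_sSup_of_directed ⟨y, hyc⟩ hdir).mp hn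
      have hxK : x ∈ K := (hcS hKc).1 ⟨n, hK⟩
      exact (Submodule.mem_sSup_of_directed ⟨y, hyc⟩ hdir).mpr ⟨K, hKc, hxK⟩
    · -- the sup of a chain of bad ideals is bad
      rintro ⟨t, ht⟩
      have htmem : ∀ f ∈ t, f ∈ sSup c := by
        intro f hf
        rw [ht]
        exact Ideal.le_radical (Ideal.subset_span hf)
      have hcommon : ∀ u : Finset R, (∀ f ∈ u, f ∈ sSup c) →
          ∃ K ∈ c, (u : Set R) ⊆ K := by
        intro u
        refine Finset.induction_on u ?_ ?_
        · intro _; exact ⟨y, hyc, by simp⟩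
        · intro a s _ ih hmem
          obtain ⟨K, hKc, hK⟩ := ih fun f hf => hmem f (Finset.mem_insert_of_mem hf)
          obtain ⟨L, hLc, hL⟩ := (Submodule.mem_sSup_of_directed ⟨y, hyc⟩ hdir).mp
            (hmem a (Finset.mem_insert_self a s))
          obtain ⟨M, hMc, hKM, hLM⟩ := hdir K hKc L hLc
          refine ⟨M, hMc, ?_⟩
          rw [Finset.coe_insert, Set.insert_subset_iff]
          exact ⟨hLM hL, fun x hx => hKM (hK hx)⟩
      obtain ⟨K, hKc, hKt⟩ := hcommon t htmem
      have h1 : Ideal.span (t : Set R) ≤ K := Ideal.span_le.mpr hKt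
      have h2 : K ≤ (Ideal.span (t : Set R)).radical := ht ▸ le_sSup hKc
      have h3 : (Ideal.span (t : Set R)).radical ≤ K :=
        ((hcS hKc).1.radical_le_iff).mpr h1
      exact (hcS hKc).2 ⟨t, le_antisymm h2 h3⟩
  obtain ⟨J, -, hJmax⟩ := zorn_le_nonempty₀ S hub I ⟨hI, hcon⟩
  obtain ⟨hJrad, hJbad⟩ := hJmax.1
  -- every radical ideal strictly above J is the radical of a f.g. ideal
  have hgood : ∀ K : Ideal R, K.IsRadical → J < K →
      ∃ t : Finset R, K = (Ideal.span (t : Set R)).radical := by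
    intro K hK hJK
    by_contra hbad
    exact hJK.not_ge (hJmax.2 ⟨hK, hbad⟩ hJK.le)
  -- J is prime
  have hJprime : J.IsPrime := by
    constructor
    · intro htop
      refine hJbad ⟨{1}, ?_⟩
      rw [htop, Finset.coe_singleton, Ideal.span_singleton_one, Ideal.radical_top]
    · intro a b hab
      by_contra hnot
      push_neg at hnot
      obtain ⟨ha, hb⟩ := hnot
      obtain ⟨A, hAdef⟩ : ∃ A : Ideal R, A = J ⊔ Ideal.span ({a} : Set R) := ⟨_, rfl⟩
      have haA : a ∈ A.radical := by
        rw [hAdef]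
        exact Ideal.le_radical ((le_sup_right : Ideal.span {a} ≤ _) (Ideal.subset_span rfl))
      have hJA : J < A.radical := by
        refine lt_of_le_of_ne ?_ ?_
        · rw [hAdef]; exact le_trans le_sup_left Ideal.le_radical
        · intro hEq; exact ha (hEq.symm ▸ haA)
      obtain ⟨tA, htA⟩ := hgood A.radical (Ideal.radical_isRadical A) hJA
      obtain ⟨C, hmemC⟩ : ∃ C : Ideal R, ∀ x : R, x ∈ C ↔ x * a ∈ J :=
        ⟨J.colon (Ideal.span ({a} : Set R)), fun x => Ideal.mem_colon_span_singleton⟩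
      have hCrad : C.IsRadical := by
        intro x hx
        obtain ⟨n, hn⟩ := hx
        rw [hmemC] at hn ⊢
        have heq : (x * a) ^ (n + 1) = (x ^ n * a) * (x * a ^ n) := by ring
        have hmem : (x * a) ^ (n + 1) ∈ J := by
          rw [heq]; exact Ideal.mul_mem_right _ _ hn
        exact hJrad ⟨n + 1, hmem⟩
      have hJC : J < C := by
        have hbC : b ∈ C := (hmemC b).mpr (by rwa [mul_comm] at hab)
        refine lt_of_le_of_ne (fun x hx => (hmemC x).mpr (Ideal.mul_mem_right a J hx)) ?_
        intro hEq
        exact hb (hEq.symm ▸ hbC)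
      obtain ⟨tB, htB⟩ := hgood C hCrad hJC
      have hBC : Ideal.span (tB : Set R) ≤ C := by rw [htB]; exact Ideal.le_radical
      -- decompose approximate generators
      have hgen : ∀ e ∈ tA, ∃ jj : R, jj ∈ J ∧
          e ∈ (Ideal.span ({jj} : Set R) ⊔ Ideal.span ({a} : Set R)).radical := by
        intro e he
        have he' : e ∈ A.radical := by
          rw [htA]
          exact Ideal.le_radical (Ideal.subset_span he)
        obtain ⟨k, hk⟩ := Ideal.mem_radical_iff.mp he'
        rw [hAdef] at hk
        obtain ⟨j, hjJ, z, hz, hjz⟩ := Submodule.mem_sup.mp hk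
        refine ⟨j, hjJ, Ideal.mem_radical_iff.mpr ⟨k, ?_⟩⟩
        rw [← hjz]
        exact Submodule.add_mem _ (Submodule.mem_sup_left (Ideal.subset_span rfl))
          (Submodule.mem_sup_right hz)
      choose jj hjJ hje using hgen
      obtain ⟨tJ, htJdef⟩ : ∃ tJ : Finset R, tJ = tA.attach.image (fun e => jj e.1 e.2) :=
        ⟨_, rfl⟩
      have htJsub : ∀ x ∈ tJ, x ∈ J := by
        intro x hx
        rw [htJdef, Finset.mem_image] at hx
        obtain ⟨e, _, rfl⟩ := hx
        exact hjJ e.1 e.2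
      have hspan_tJ_le : Ideal.span (tJ : Set R) ≤ J :=
        Ideal.span_le.mpr fun x hx => htJsub x hx
      obtain ⟨P, hPdef⟩ :
          ∃ P : Ideal R, P = Ideal.span (tJ : Set R) ⊔ Ideal.span ({a} : Set R) := ⟨_, rfl⟩
      have hJP : J ≤ P.radical := by
        intro x hx
        have hx' : x ∈ A.radical := by
          rw [hAdef]
          exact (le_trans (le_sup_left : J ≤ J ⊔ Ideal.span ({a} : Set R)) Ideal.le_radical) hx
        rw [htA] at hx'
        have h1 : Ideal.span (tA : Set R) ≤ P.radical := by
          rw [Ideal.span_le]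
          intro e he
          refine Ideal.radical_mono ?_ (hje e he)
          rw [hPdef]
          refine sup_le_sup ?_ le_rfl
          refine Ideal.span_le.mpr (Set.singleton_subset_iff.mpr ?_)
          have hmem : jj e he ∈ tJ := by
            rw [htJdef, Finset.mem_image]
            exact ⟨⟨e, he⟩, Finset.mem_attach _ _, rfl⟩
          exact Ideal.subset_span hmem
        have h2 : (Ideal.span (tA : Set R)).radical ≤ P.radical := by
          calc (Ideal.span (tA : Set R)).radical
              ≤ P.radical.radical := Ideal.radical_mono h1
            _ = P.radical := Ideal.radical_idem P
        exact h2 hx'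
      obtain ⟨D, hDdef⟩ : ∃ D : Ideal R,
          D = Ideal.span (tJ : Set R) ⊔ Ideal.span ({a} : Set R) * Ideal.span (tB : Set R) :=
        ⟨_, rfl⟩
      have hDJ : D ≤ J := by
        rw [hDdef]
        refine sup_le hspan_tJ_le ?_
        rw [Ideal.mul_le]
        intro r hr s hs
        obtain ⟨cc, rfl⟩ := Ideal.mem_span_singleton'.mp hr
        have hsC : s * a ∈ J := (hmemC s).mp (hBC hs)
        have heq : (cc * a) * s = cc * (s * a) := by ring
        rw [heq]
        exact Ideal.mul_mem_left _ _ hsC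
      have hJD : J ≤ D.radical := by
        intro x hx
        obtain ⟨k, hk⟩ := Ideal.mem_radical_iff.mp (hJP hx)
        have hk1 : x ^ (k + 1) ∈ P := by
          rw [pow_succ]
          exact Ideal.mul_mem_right x P hk
        rw [hPdef] at hk1
        obtain ⟨u, huP, z, hz, huz⟩ := Submodule.mem_sup.mp hk1
        obtain ⟨w, rfl⟩ := Ideal.mem_span_singleton'.mp hz
        have hwa : w * a ∈ J := by
          have hxk : x ^ (k + 1) ∈ J := Ideal.pow_mem_of_mem J hx (k + 1) (Nat.succ_pos k)
          have huJ : u ∈ J := hspan_tJ_le huP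
          have heq : w * a = x ^ (k + 1) - u := by rw [← huz]; ring
          rw [heq]
          exact Ideal.sub_mem _ hxk huJ
        have hwC : w ∈ C := (hmemC w).mpr hwa
        rw [htB] at hwC
        obtain ⟨m, hm⟩ := Ideal.mem_radical_iff.mp hwC
        have hm1 : w ^ (m + 1) ∈ Ideal.span (tB : Set R) := by
          rw [pow_succ]
          exact Ideal.mul_mem_right w _ hm
        have haP : a ^ (m + 1) ∈ Ideal.span ({a} : Set R) :=
          Ideal.pow_mem_of_mem (Ideal.span ({a} : Set R)) (Ideal.subset_span rfl)
            (m + 1) (Nat.succ_pos m)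
        have hwaD : (w * a) ^ (m + 1) ∈ D := by
          have heq : (w * a) ^ (m + 1) = a ^ (m + 1) * w ^ (m + 1) := by ring
          rw [heq, hDdef]
          exact (le_sup_right : _ ≤ Ideal.span (tJ : Set R) ⊔ _)
            (Ideal.mul_mem_mul haP hm1)
        have hwaDrad : w * a ∈ D.radical :=
          Ideal.mem_radical_of_pow_mem (Ideal.le_radical hwaD)
        have huD : u ∈ D.radical := by
          refine Ideal.le_radical ?_
          rw [hDdef]
          exact (le_sup_left : Ideal.span (tJ : Set R) ≤ _) huP
        have hxkD : x ^ (k + 1) ∈ D.radical := by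
          rw [← huz]
          exact Submodule.add_mem _ huD hwaDrad
        exact Ideal.mem_radical_of_pow_mem hxkD
      have hJeq : J = D.radical := le_antisymm hJD (hJrad.radical_le_iff.mpr hDJ)
      have htD : Ideal.span ((tJ ∪ tB.image (fun x => a * x) : Finset R) : Set R) = D := by
        rw [hDdef, Finset.coe_union, Finset.coe_image, Ideal.span_union,
          Ideal.span_mul_span', Set.singleton_mul]
      exact hJbad ⟨tJ ∪ tB.image (fun x => a * x), by rw [hJeq, ← htD]⟩
  obtain ⟨t, ht⟩ := hprime J hJprime
  exact hJbad ⟨t, ht⟩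

end Stmt19Aux

/-- `Spec R` is a Noetherian topological space with respect to the Zariski topology if and
only if the open sets of the flat topology on `Spec R` are stable under arbitrary
intersections. -/
theorem stmt19 (R : Type*) [CommRing R] :
    TopologicalSpace.NoetherianSpace (PrimeSpectrum R) ↔
      ∀ S : Set (Set (PrimeSpectrum R)),
        (∀ U ∈ S, @IsOpen _ (flatTopology R) U) → @IsOpen _ (flatTopology R) (⋂₀ S) := by
  constructor
  · -- Noetherian implies stability of flat-opens under intersections
    intro hN S hS
    haveI := hN
    rw [Stmt19Aux.isOpen_flat_iff]
    have key : ∀ p ∈ ⋂₀ S, TopologicalSpace.GenerateOpen (Stmt19Aux.subB R)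
        (PrimeSpectrum.zeroLocus (p.asIdeal : Set R)) ∧
        PrimeSpectrum.zeroLocus (p.asIdeal : Set R) ⊆ ⋂₀ S := by
      intro p hp
      constructor
      · obtain ⟨t, ht⟩ := (PrimeSpectrum.isCompact_isOpen_iff
            (s := (PrimeSpectrum.zeroLocus (p.asIdeal : Set R))ᶜ)).mp
          ⟨TopologicalSpace.NoetherianSpace.isCompact _,
            (PrimeSpectrum.isClosed_zeroLocus (p.asIdeal : Set R)).isOpen_compl⟩
        have ht' : PrimeSpectrum.zeroLocus (t : Set R)
            = PrimeSpectrum.zeroLocus (p.asIdeal : Set R) := compl_injective ht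
        rw [← ht']
        exact Stmt19Aux.gen_zeroLocus_finset t
      · intro q hq U hU
        refine Stmt19Aux.stable (Stmt19Aux.isOpen_flat_iff.mp (hS U hU)) p q ?_ (hp U hU)
        exact fun x hx => (PrimeSpectrum.mem_zeroLocus _ _).mp hq hx
    have heq : ⋂₀ S = ⋃₀ ((fun p : PrimeSpectrum R =>
        PrimeSpectrum.zeroLocus (p.asIdeal : Set R)) '' (⋂₀ S)) := by
      apply Set.Subset.antisymm
      · intro p hp
        exact ⟨_, ⟨p, hp, rfl⟩, (PrimeSpectrum.mem_zeroLocus _ _).mpr Set.Subset.rfl⟩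
      · rintro q ⟨_, ⟨p, hp, rfl⟩, hq⟩
        exact (key p hp).2 hq
    rw [heq]
    exact .sUnion _ (by rintro _ ⟨p, hp, rfl⟩; exact (key p hp).1)
  · -- stability of flat-opens under intersections implies Noetherian
    intro h
    rw [TopologicalSpace.noetherianSpace_iff_opens]
    intro s
    have hprime : ∀ p : Ideal R, p.IsPrime →
        ∃ t : Finset R, p = (Ideal.span (t : Set R)).radical := by
      intro p hp
      set P : PrimeSpectrum R := ⟨p, hp⟩ with hPdef
      have h1 : PrimeSpectrum.zeroLocus (p : Set R) =
          ⋂₀ {U : Set (PrimeSpectrum R) | ∃ f ∈ p, U = PrimeSpectrum.zeroLocus {f}} := by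
        ext q
        simp only [Set.mem_sInter, Set.mem_setOf_eq, PrimeSpectrum.mem_zeroLocus]
        constructor
        · rintro hq U ⟨f, hf, rfl⟩
          exact (PrimeSpectrum.mem_zeroLocus _ _).mpr
            (Set.singleton_subset_iff.mpr (hq hf))
        · intro hq f hf
          exact (PrimeSpectrum.mem_zeroLocus _ _).mp (hq _ ⟨f, hf, rfl⟩) rfl
      have hopen : TopologicalSpace.GenerateOpen (Stmt19Aux.subB R)
          (PrimeSpectrum.zeroLocus (p : Set R)) := by
        rw [h1]
        refine Stmt19Aux.isOpen_flat_iff.mp (h _ ?_)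
        rintro U ⟨f, _, rfl⟩
        exact Stmt19Aux.isOpen_flat_iff.mpr (.basic _ ⟨f, rfl⟩)
      obtain ⟨t, htP, htsub⟩ := Stmt19Aux.exists_finset hopen P
        ((PrimeSpectrum.mem_zeroLocus _ _).mpr Set.Subset.rfl)
      refine ⟨t, le_antisymm ?_ ?_⟩
      · have hsub := htsub
        rw [← PrimeSpectrum.zeroLocus_span (t : Set R)] at hsub
        exact (PrimeSpectrum.zeroLocus_subset_zeroLocus_iff _ _).mp hsub
      · have h3 : Ideal.span (t : Set R) ≤ p :=
          Ideal.span_le.mpr fun f hf => (PrimeSpectrum.mem_zeroLocus _ _).mp htP hf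
        calc (Ideal.span (t : Set R)).radical
            ≤ p.radical := Ideal.radical_mono h3
          _ = p := hp.radical
    have hrad := PrimeSpectrum.isRadical_vanishingIdeal ((s : Set (PrimeSpectrum R))ᶜ)
    obtain ⟨t, ht⟩ := Stmt19Aux.op hprime hrad
    have hz : PrimeSpectrum.zeroLocus (t : Set R) = (s : Set (PrimeSpectrum R))ᶜ := by
      rw [← PrimeSpectrum.zeroLocus_span (t : Set R), ← PrimeSpectrum.zeroLocus_radical,
        ← ht, PrimeSpectrum.zeroLocus_vanishingIdeal_eq_closure]
      exact s.isOpen.isClosed_compl.closure_eq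
    exact (PrimeSpectrum.isCompact_isOpen_iff.mpr ⟨t, by rw [hz, compl_compl]⟩).1
end
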